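/- arXiv:2403.08303 — 4 statements merged into one kernel-verified Lean document; each statement's English description precedes it below -/
import Mathlib

section
/- Let 0 ≤ ℓ ≤ k be integers, let u, n be positive integers, and let 0 < ε ≤ 1 be a real number such that (1−ε)^ℓ·n ≤ u. Suppose G is a graph on n vertices such that every vertex subset S with |S| ≥ u contains a vertex whose degree in the induced subgraph G[S] is at least ε·|S| − 1. Then the number of independent sets of size k in G is at most C(n,ℓ)·C(u,k−ℓ), where C(a,b) denotes the binomial coefficient. -/
/-- The degree of `v` in the induced subgraph `G[S]`: the number of vertices of `S`
adjacent to `v`. -/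
noncomputable def degreeOn {V : Type} (G : SimpleGraph V) (S : Finset V) (v : V) : ℕ :=
  Nat.card {w : V // w ∈ S ∧ G.Adj v w}

/-- `S` is an independent set of `G`. -/
def IsIndepOn {V : Type} (G : SimpleGraph V) (S : Finset V) : Prop :=
  ∀ u ∈ S, ∀ v ∈ S, ¬G.Adj u v

private lemma degreeOn_eq {V : Type} (G : SimpleGraph V) (S : Finset V) (v : V)
    [DecidablePred (G.Adj v)] :
    degreeOn G S v = (S.filter (fun w => G.Adj v w)).card := by
  rw [degreeOn]
  have h : {w : V | w ∈ S ∧ G.Adj v w} = ↑(S.filter (fun w => G.Adj v w)) := by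
    ext w; simp
  calc Nat.card {w : V // w ∈ S ∧ G.Adj v w} = Set.ncard {w : V | w ∈ S ∧ G.Adj v w} :=
        Nat.card_coe_set_eq _
    _ = _ := by rw [h, Set.ncard_coe_finset]

private lemma degreeOn_map {V : Type} (G : SimpleGraph V) (p : V → Prop) [DecidablePred p]
    (T : Finset (Subtype p)) (t : Subtype p) :
    degreeOn (G.comap (Subtype.val)) T t
      = degreeOn G (T.map (Function.Embedding.subtype p)) t.val := by
  classical
  rw [degreeOn_eq, degreeOn_eq, Finset.filter_map, Finset.card_map]
  rfl

private lemma hdeg_transfer {V : Type} (G : SimpleGraph V) (p : V → Prop) [DecidablePred p]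
    (u : ℕ) (ε : ℝ)
    (hdeg : ∀ S : Finset V, u ≤ S.card →
      ∃ w ∈ S, ε * (S.card : ℝ) - 1 ≤ (degreeOn G S w : ℝ)) :
    ∀ T : Finset (Subtype p), u ≤ T.card →
      ∃ t ∈ T, ε * (T.card : ℝ) - 1 ≤ (degreeOn (G.comap Subtype.val) T t : ℝ) := by
  intro T hT
  obtain ⟨w, hw, hwd⟩ := hdeg (T.map (Function.Embedding.subtype p))
    (by rwa [Finset.card_map])
  rw [Finset.mem_map] at hw
  obtain ⟨t, ht, rfl⟩ := hw
  refine ⟨t, ht, ?_⟩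
  rw [degreeOn_map]
  rw [Finset.card_map] at hwd
  exact hwd

private lemma count_le_choose {V : Type} [Fintype V] (G : SimpleGraph V) (k : ℕ) :
    Nat.card {S : Finset V // S.card = k ∧ IsIndepOn G S} ≤ (Fintype.card V).choose k := by
  classical
  have h1 : Nat.card {S : Finset V // S.card = k ∧ IsIndepOn G S}
      ≤ Nat.card {S : Finset V // S.card = k} :=
    Nat.card_le_card_of_injective (fun S => ⟨S.1, S.2.1⟩)
      (by intro a b h; simp only [Subtype.mk.injEq] at h; exact Subtype.ext h)
  rwa [Nat.card_eq_fintype_card (α := {S : Finset V // S.card = k}),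
    Fintype.card_finset_len] at h1

private lemma count_split {V : Type} [Fintype V] (G : SimpleGraph V) (k : ℕ) (v : V) :
    Nat.card {S : Finset V // S.card = k ∧ IsIndepOn G S}
      ≤ Nat.card {S : Finset V // (S.card = k ∧ IsIndepOn G S) ∧ v ∈ S}
        + Nat.card {S : Finset V // (S.card = k ∧ IsIndepOn G S) ∧ v ∉ S} := by
  classical
  have e1 : {S : Finset V // (S.card = k ∧ IsIndepOn G S) ∧ v ∈ S}
      ≃ {S : {S : Finset V // S.card = k ∧ IsIndepOn G S} // v ∈ S.1} :=
    (Equiv.subtypeSubtypeEquivSubtypeInter _ _).symm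
  have e2 : {S : Finset V // (S.card = k ∧ IsIndepOn G S) ∧ v ∉ S}
      ≃ {S : {S : Finset V // S.card = k ∧ IsIndepOn G S} // ¬ v ∈ S.1} :=
    (Equiv.subtypeSubtypeEquivSubtypeInter _ _).symm
  rw [Nat.card_congr e1, Nat.card_congr e2, ← Nat.card_sum,
    Nat.card_congr (Equiv.sumCompl
      (fun S : {S : Finset V // S.card = k ∧ IsIndepOn G S} => v ∈ S.1))]

private lemma count_avoid {V : Type} [Fintype V] (G : SimpleGraph V) (k : ℕ) (v : V) :
    Nat.card {S : Finset V // (S.card = k ∧ IsIndepOn G S) ∧ v ∉ S}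
      ≤ Nat.card {T : Finset {w : V // w ≠ v} //
          T.card = k ∧ IsIndepOn (G.comap Subtype.val) T} := by
  classical
  have hmap : ∀ S : {S : Finset V // (S.card = k ∧ IsIndepOn G S) ∧ v ∉ S},
      ((S.1.subtype (fun w => w ≠ v)).map (Function.Embedding.subtype _)) = S.1 :=
    fun S => Finset.subtype_map_of_mem (fun x hx => fun hxv => S.2.2 (hxv ▸ hx))
  refine Nat.card_le_card_of_injective
    (fun S => ⟨S.1.subtype (fun w => w ≠ v), ?_, ?_⟩) ?_
  · rw [Finset.card_subtype,
      Finset.filter_true_of_mem (show ∀ x ∈ S.1, x ≠ v from fun x hx h => S.2.2 (h ▸ hx))]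
    exact S.2.1.1
  · intro a ha b hb
    rw [Finset.mem_subtype] at ha hb
    exact S.2.1.2 a ha b hb
  · intro a b h
    have h1 : (a.1.subtype (fun w => w ≠ v)) = (b.1.subtype (fun w => w ≠ v)) := by
      simpa [Subtype.mk.injEq] using h
    apply Subtype.ext
    rw [← hmap a, ← hmap b, h1]

private lemma count_contain {V : Type} [Fintype V] (G : SimpleGraph V) (k : ℕ) (v : V) :
    Nat.card {S : Finset V // (S.card = k ∧ IsIndepOn G S) ∧ v ∈ S}
      ≤ Nat.card {T : Finset {w : V // ¬(w = v ∨ G.Adj v w)} //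
          T.card = k - 1 ∧ IsIndepOn (G.comap Subtype.val) T} := by
  classical
  have hfil : ∀ S : {S : Finset V // (S.card = k ∧ IsIndepOn G S) ∧ v ∈ S},
      S.1.filter (fun w => ¬(w = v ∨ G.Adj v w)) = S.1.erase v := by
    intro S
    ext w
    simp only [Finset.mem_filter, Finset.mem_erase, not_or]
    constructor
    · rintro ⟨hw, hwv, -⟩; exact ⟨hwv, hw⟩
    · rintro ⟨hwv, hw⟩; exact ⟨hw, hwv, S.2.1.2 v S.2.2 w hw⟩
  have hmap : ∀ S : {S : Finset V // (S.card = k ∧ IsIndepOn G S) ∧ v ∈ S},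
      ((S.1.subtype (fun w => ¬(w = v ∨ G.Adj v w))).map
        (Function.Embedding.subtype _)) = S.1.erase v := by
    intro S; rw [Finset.subtype_map, hfil]
  refine Nat.card_le_card_of_injective
    (fun S => ⟨S.1.subtype (fun w => ¬(w = v ∨ G.Adj v w)), ?_, ?_⟩) ?_
  · rw [Finset.card_subtype, hfil S, Finset.card_erase_of_mem S.2.2, S.2.1.1]
  · intro a ha b hb
    rw [Finset.mem_subtype] at ha hb
    exact S.2.1.2 a ha b hb
  · intro a b h
    have h1 : a.1.subtype (fun w => ¬(w = v ∨ G.Adj v w))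
        = b.1.subtype (fun w => ¬(w = v ∨ G.Adj v w)) := by
      simpa [Subtype.mk.injEq] using h
    have h2 : a.1.erase v = b.1.erase v := by rw [← hmap a, ← hmap b, h1]
    apply Subtype.ext
    rw [← Finset.insert_erase a.2.2, ← Finset.insert_erase b.2.2, h2]

private lemma aux (n : ℕ) : ∀ (V : Type) [Fintype V], Fintype.card V = n →
    ∀ (G : SimpleGraph V) (ℓ k u : ℕ), ℓ ≤ k → 0 < u →
    ∀ (ε : ℝ), 0 < ε → ε ≤ 1 → (1 - ε) ^ ℓ * (n : ℝ) ≤ (u : ℝ) →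
    (∀ S : Finset V, u ≤ S.card →
      ∃ w ∈ S, ε * (S.card : ℝ) - 1 ≤ (degreeOn G S w : ℝ)) →
    Nat.card {S : Finset V // S.card = k ∧ IsIndepOn G S}
      ≤ n.choose ℓ * u.choose (k - ℓ) := by
  induction n using Nat.strong_induction_on with
  | _ n IH =>
  intro V _ hV G ℓ k u hlk hu ε hε0 hε1 hun hdeg
  classical
  cases ℓ with
  | zero =>
    have hnu : n ≤ u := by
      have h : (n : ℝ) ≤ u := by simpa using hun
      exact_mod_cast h
    calc Nat.card {S : Finset V // S.card = k ∧ IsIndepOn G S} ≤ n.choose k := by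
          rw [← hV]; exact count_le_choose G k
      _ ≤ u.choose k := Nat.choose_le_choose k hnu
      _ = n.choose 0 * u.choose (k - 0) := by simp
  | succ ℓ =>
    by_cases hnu : n < u
    · have h1 : Nat.card {S : Finset V // S.card = k ∧ IsIndepOn G S} ≤ n.choose k := by
        rw [← hV]; exact count_le_choose G k
      by_cases hkn : k ≤ n
      · have hid := Nat.choose_mul (n := n) (show ℓ + 1 ≤ k from hlk)
        have hck : 1 ≤ k.choose (ℓ + 1) := Nat.choose_pos hlk
        calc Nat.card {S : Finset V // S.card = k ∧ IsIndepOn G S}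
            ≤ n.choose k := h1
          _ ≤ n.choose k * k.choose (ℓ + 1) := Nat.le_mul_of_pos_right _ hck
          _ = n.choose (ℓ + 1) * (n - (ℓ + 1)).choose (k - (ℓ + 1)) := hid
          _ ≤ n.choose (ℓ + 1) * u.choose (k - (ℓ + 1)) :=
              Nat.mul_le_mul_left _ (Nat.choose_le_choose _ (by omega))
      · have h0 : n.choose k = 0 := Nat.choose_eq_zero_of_lt (by omega)
        exact le_trans (h1.trans (le_of_eq h0)) (Nat.zero_le _)
    · push_neg at hnu
      have hn1 : 1 ≤ n := le_trans hu hnu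
      have hcu : u ≤ (Finset.univ : Finset V).card := by
        rw [Finset.card_univ, hV]; exact hnu
      obtain ⟨v, -, hvd⟩ := hdeg Finset.univ hcu
      set d : ℕ := degreeOn G Finset.univ v with hd
      have hdfilter : d = (Finset.univ.filter (G.Adj v)).card := degreeOn_eq G _ v
      have hvd' : ε * (n : ℝ) - 1 ≤ (d : ℝ) := by
        rwa [Finset.card_univ, hV] at hvd
      -- cardinality of the two vertex subtypes
      have hcard1 : Fintype.card {w : V // w = v ∨ G.Adj v w} = d + 1 := by
        rw [Fintype.card_subtype]
        have he : Finset.univ.filter (fun w => w = v ∨ G.Adj v w)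
            = insert v (Finset.univ.filter (fun w => G.Adj v w)) := by
          ext w; simp
        rw [he, Finset.card_insert_of_notMem (by simp), ← hdfilter]
      have hdn : d + 1 ≤ n := by
        rw [← hcard1, ← hV]; exact Fintype.card_subtype_le _
      have hn₁ : Fintype.card {w : V // ¬(w = v ∨ G.Adj v w)} = n - (d + 1) := by
        rw [Fintype.card_subtype_compl, hcard1, hV]
      have hn₂ : Fintype.card {w : V // w ≠ v} = n - 1 := by
        rw [Fintype.card_subtype_compl, hV, Fintype.card_subtype_eq]
      -- real bounds
      have hpow : (0:ℝ) ≤ (1 - ε) ^ ℓ := pow_nonneg (by linarith) ℓ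
      have hr1 : ((n - (d + 1) : ℕ) : ℝ) ≤ (1 - ε) * n := by
        rw [Nat.cast_sub hdn]
        push_cast
        linarith
      have hun₁ : (1 - ε) ^ ℓ * ((n - (d + 1) : ℕ) : ℝ) ≤ (u : ℝ) := by
        calc (1 - ε) ^ ℓ * ((n - (d + 1) : ℕ) : ℝ)
            ≤ (1 - ε) ^ ℓ * ((1 - ε) * n) := mul_le_mul_of_nonneg_left hr1 hpow
          _ = (1 - ε) ^ (ℓ + 1) * n := by ring
          _ ≤ u := hun
      have hun₂ : (1 - ε) ^ (ℓ + 1) * ((n - 1 : ℕ) : ℝ) ≤ (u : ℝ) := by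
        refine le_trans ?_ hun
        have hpow1 : (0:ℝ) ≤ (1 - ε) ^ (ℓ + 1) := pow_nonneg (by linarith) (ℓ + 1)
        have : ((n - 1 : ℕ) : ℝ) ≤ (n : ℝ) := by
          rw [Nat.cast_sub hn1]; push_cast; linarith
        exact mul_le_mul_of_nonneg_left this hpow1
      -- apply induction hypotheses
      have hb1 := IH (n - (d + 1)) (by omega) {w : V // ¬(w = v ∨ G.Adj v w)} hn₁
        (G.comap Subtype.val) ℓ (k - 1) u (by omega) hu ε hε0 hε1 hun₁
        (hdeg_transfer G _ u ε hdeg)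
      have hb2 := IH (n - 1) (by omega) {w : V // w ≠ v} hn₂
        (G.comap Subtype.val) (ℓ + 1) k u hlk hu ε hε0 hε1 hun₂
        (hdeg_transfer G _ u ε hdeg)
      have hk1 : (k - 1) - ℓ = k - (ℓ + 1) := by omega
      rw [hk1] at hb1
      calc Nat.card {S : Finset V // S.card = k ∧ IsIndepOn G S}
          ≤ Nat.card {S : Finset V // (S.card = k ∧ IsIndepOn G S) ∧ v ∈ S}
            + Nat.card {S : Finset V // (S.card = k ∧ IsIndepOn G S) ∧ v ∉ S} :=
            count_split G k v
        _ ≤ (n - (d + 1)).choose ℓ * u.choose (k - (ℓ + 1))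
            + (n - 1).choose (ℓ + 1) * u.choose (k - (ℓ + 1)) :=
            Nat.add_le_add (le_trans (count_contain G k v) hb1)
              (le_trans (count_avoid G k v) hb2)
        _ ≤ (n - 1).choose ℓ * u.choose (k - (ℓ + 1))
            + (n - 1).choose (ℓ + 1) * u.choose (k - (ℓ + 1)) :=
            Nat.add_le_add_right
              (Nat.mul_le_mul_right _ (Nat.choose_le_choose _ (by omega))) _
        _ = ((n - 1).choose ℓ + (n - 1).choose (ℓ + 1)) * u.choose (k - (ℓ + 1)) := by ring
        _ = n.choose (ℓ + 1) * u.choose (k - (ℓ + 1)) := by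
            obtain ⟨m, rfl⟩ : ∃ m, n = m + 1 := ⟨n - 1, by omega⟩
            simp [Nat.choose_succ_succ]

/-- Container-type counting lemma: if in every vertex subset `S` of size at least `u` some
vertex has degree at least `ε·|S| - 1` in `G[S]`, then the number of independent sets of
size `k` is at most `C(n,ℓ)·C(u,k-ℓ)`. -/
theorem count_indep_sets_upper_bound
    (ℓ k u n : ℕ) (hlk : ℓ ≤ k) (hu : 0 < u) (hn : 0 < n)
    (ε : ℝ) (hε0 : 0 < ε) (hε1 : ε ≤ 1)
    (hun : (1 - ε) ^ ℓ * (n : ℝ) ≤ (u : ℝ))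
    (V : Type) [Fintype V] (hV : Fintype.card V = n) (G : SimpleGraph V)
    (hdeg : ∀ S : Finset V, u ≤ S.card →
      ∃ v ∈ S, ε * (S.card : ℝ) - 1 ≤ (degreeOn G S v : ℝ)) :
    Nat.card {S : Finset V // S.card = k ∧ IsIndepOn G S} ≤
      n.choose ℓ * u.choose (k - ℓ) := by
  exact aux n V hV G ℓ k u hlk hu ε hε0 hε1 hun hdeg
end

section
/- Let F be a hereditary family of graphs such that every graph in F has the (t,k)-homogeneous property, where t and k are positive integers. Let G be a graph on n vertices such that at least half of all vertex subsets of G of size 2t contain a subset of t vertices inducing a subgraph belonging to F (assume n ≥ 2t). Then G contains at least (1/2)·(n/(2t))^k homogeneous sets of size k. -/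
/-- `S` is a homogeneous set of `G`: a clique or an independent set. -/
def IsHomog {V : Type} (G : SimpleGraph V) (S : Finset V) : Prop :=
  G.IsClique (S : Set V) ∨ Gᶜ.IsClique (S : Set V)

/-- `G` has the `(t,k)`-homogeneous property: every subset of `t` vertices contains a
homogeneous subset of size `k`. -/
def TKHomog {V : Type} (t k : ℕ) (G : SimpleGraph V) : Prop :=
  ∀ T : Finset V, T.card = t → ∃ S ⊆ T, S.card = k ∧ IsHomog G S

/-- A hereditary family of graphs. -/
def Hereditary (F : ∀ n : ℕ, SimpleGraph (Fin n) → Prop) : Prop :=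
  ∀ n : ℕ, ∀ G : SimpleGraph (Fin n), F n G →
    ∀ (S : Finset (Fin n)) (m : ℕ) (G' : SimpleGraph (Fin m)),
      Nonempty (G' ≃g G.induce (S : Set (Fin n))) → F m G'

/-- The graph `G` belongs (up to isomorphism) to the family `F`. -/
def InFamily (F : ∀ n : ℕ, SimpleGraph (Fin n) → Prop) {W : Type} (G : SimpleGraph W) : Prop :=
  ∃ m : ℕ, ∃ G' : SimpleGraph (Fin m), F m G' ∧ Nonempty (G ≃g G')

private lemma ratio_pow_le : ∀ (k a b : ℕ), k ≤ b → b ≤ a →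
    ((a : ℝ) / b) ^ k * ((a - k).choose (b - k) : ℕ) ≤ (a.choose b : ℕ) := by
  intro k
  induction k with
  | zero => intro a b _ _; simp
  | succ k ih =>
    intro a b hkb hba
    have hb : 1 ≤ b := le_trans (Nat.succ_le_succ (Nat.zero_le k)) hkb
    have ha : 1 ≤ a := hb.trans hba
    have hb0 : (0:ℝ) < (b:ℝ) := by exact_mod_cast hb
    have key_nat : a * (a-1).choose (b-1) = a.choose b * b := by
      have h := Nat.add_one_mul_choose_eq (a-1) (b-1)
      simp only [Nat.succ_eq_add_one, Nat.sub_add_cancel ha, Nat.sub_add_cancel hb] at h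
      exact h
    have key : (a.choose b : ℝ) = ((a:ℝ) / b) * ((a-1).choose (b-1) : ℕ) := by
      rw [div_mul_eq_mul_div, eq_div_iff (ne_of_gt hb0)]
      exact_mod_cast key_nat.symm
    have hsub : ∀ x : ℕ, x - (k+1) = x - 1 - k := by
      intro x; omega
    rw [hsub a, hsub b]
    rcases Nat.eq_zero_or_pos k with rfl | hk
    · rw [key]; simp
    · have hb2 : 2 ≤ b := le_trans (Nat.succ_le_succ hk) hkb
      have hb1 : (0:ℝ) < (b:ℝ) - 1 := by
        have : (2:ℝ) ≤ (b:ℝ) := by exact_mod_cast hb2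
        linarith
      have hab : (b:ℝ) ≤ (a:ℝ) := by exact_mod_cast hba
      have hstep : ((a:ℝ)/b) ≤ ((a:ℝ)-1)/((b:ℝ)-1) := by
        rw [div_le_div_iff₀ hb0 hb1]
        nlinarith
      have ihm := ih (a-1) (b-1) (by omega) (by omega)
      have hcasta : ((a-1 : ℕ) : ℝ) = (a:ℝ) - 1 := by
        push_cast [Nat.cast_sub ha]; ring
      have hcastb : ((b-1 : ℕ) : ℝ) = (b:ℝ) - 1 := by
        push_cast [Nat.cast_sub hb]; ring
      rw [hcasta, hcastb] at ihm
      have hnn : (0:ℝ) ≤ ((a-1-k).choose (b-1-k) : ℕ) := by positivity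
      have h0 : (0:ℝ) ≤ (a:ℝ)/b := by positivity
      calc ((a:ℝ)/b)^(k+1) * ((a-1-k).choose (b-1-k) : ℕ)
          = ((a:ℝ)/b) * (((a:ℝ)/b)^k * ((a-1-k).choose (b-1-k) : ℕ)) := by ring
        _ ≤ ((a:ℝ)/b) * ((((a:ℝ)-1)/((b:ℝ)-1))^k * ((a-1-k).choose (b-1-k) : ℕ)) := by
            apply mul_le_mul_of_nonneg_left _ h0
            exact mul_le_mul_of_nonneg_right (pow_le_pow_left₀ h0 hstep k) hnn
        _ ≤ ((a:ℝ)/b) * ((a-1).choose (b-1) : ℕ) := mul_le_mul_of_nonneg_left ihm h0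
        _ = (a.choose b : ℕ) := key.symm

/-- A `2t`-set containing a `t`-set inducing a graph in `F` contains a homogeneous `k`-set
(and moreover `k ≤ t`). -/
private lemma good_contains_homog
    (F : ∀ n : ℕ, SimpleGraph (Fin n) → Prop)
    (t k : ℕ)
    (hTK : ∀ m : ℕ, ∀ G : SimpleGraph (Fin m), F m G → TKHomog t k G)
    {n : ℕ} (G : SimpleGraph (Fin n)) (T : Finset (Fin n))
    (hT : ∃ S ⊆ T, S.card = t ∧ InFamily F (G.induce (S : Set (Fin n)))) :
    k ≤ t ∧ ∃ K ⊆ T, K.card = k ∧ IsHomog G K := by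
  obtain ⟨S, hST, hScard, m, G', hFG', ⟨e⟩⟩ := hT
  have hmt : m = t := by
    have h := Fintype.card_congr e.toEquiv
    simpa [Fintype.card_coe, hScard] using h.symm
  obtain ⟨S', hS'sub, hS'card, hhom⟩ := hTK m G' hFG' Finset.univ (by simp [hmt])
  have hkt : k ≤ t := by
    calc k = S'.card := hS'card.symm
      _ ≤ (Finset.univ : Finset (Fin m)).card := Finset.card_le_univ S'
      _ = t := by simp [hmt]
  set f : Fin m → Fin n := fun v => ((e.symm v : (S : Set (Fin n))) : Fin n) with hf
  have hfinj : Function.Injective f := by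
    intro a b hab
    exact e.symm.toEquiv.injective (Subtype.ext hab)
  refine ⟨hkt, S'.image f, ?_, ?_, ?_⟩
  · intro x hx
    obtain ⟨v, _, rfl⟩ := Finset.mem_image.mp hx
    exact hST (e.symm v).2
  · rw [Finset.card_image_of_injective _ hfinj, hS'card]
  · have hadj : ∀ a b : Fin m, G.Adj (f a) (f b) ↔ G'.Adj a b := by
      intro a b
      exact e.symm.map_adj_iff
    rcases hhom with h | h
    · left
      intro x hx y hy hxy
      obtain ⟨a, ha, rfl⟩ := Finset.mem_image.mp (Finset.mem_coe.mp hx)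
      obtain ⟨b, hb, rfl⟩ := Finset.mem_image.mp (Finset.mem_coe.mp hy)
      have hab : a ≠ b := fun h' => hxy (by rw [h'])
      exact (hadj a b).mpr (h (Finset.mem_coe.mpr ha) (Finset.mem_coe.mpr hb) hab)
    · right
      intro x hx y hy hxy
      obtain ⟨a, ha, rfl⟩ := Finset.mem_image.mp (Finset.mem_coe.mp hx)
      obtain ⟨b, hb, rfl⟩ := Finset.mem_image.mp (Finset.mem_coe.mp hy)
      have hab : a ≠ b := fun h' => hxy (by rw [h'])
      have h2 := h (Finset.mem_coe.mpr ha) (Finset.mem_coe.mpr hb) hab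
      rw [SimpleGraph.compl_adj] at h2 ⊢
      exact ⟨hxy, fun hadj' => h2.2 ((hadj a b).mp hadj')⟩

/-- If every graph in a hereditary family `F` has the `(t,k)`-homogeneous property and at
least half of the `2t`-subsets of vertices of `G` contain a `t`-subset inducing a graph in
`F`, then `G` has at least `(1/2)·(n/(2t))^k` homogeneous sets of size `k`. -/
theorem count_homog_sets_lower_bound
    (F : ∀ n : ℕ, SimpleGraph (Fin n) → Prop) (hF : Hereditary F)
    (t k : ℕ) (ht : 0 < t) (hk : 0 < k)
    (hTK : ∀ m : ℕ, ∀ G : SimpleGraph (Fin m), F m G → TKHomog t k G)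
    (n : ℕ) (hn : 2 * t ≤ n) (G : SimpleGraph (Fin n))
    (hhalf : (n.choose (2 * t) : ℝ) / 2 ≤
      (Nat.card {T : Finset (Fin n) // T.card = 2 * t ∧
        ∃ S ⊆ T, S.card = t ∧ InFamily F (G.induce (S : Set (Fin n)))} : ℝ)) :
    (1 / 2 : ℝ) * ((n : ℝ) / (2 * t)) ^ k ≤
      (Nat.card {S : Finset (Fin n) // S.card = k ∧ IsHomog G S} : ℝ) := by
  classical
  set PA : Finset (Fin n) → Prop := fun T => T.card = 2 * t ∧
      ∃ S ⊆ T, S.card = t ∧ InFamily F (G.induce (S : Set (Fin n))) with hPA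
  set PB : Finset (Fin n) → Prop := fun S => S.card = k ∧ IsHomog G S with hPB
  set A : Finset (Finset (Fin n)) := Finset.univ.filter PA with hA
  set B : Finset (Finset (Fin n)) := Finset.univ.filter PB with hB
  have hAcard : (Nat.card {T : Finset (Fin n) // PA T}) = A.card := by
    rw [Nat.card_eq_fintype_card, Fintype.card_subtype]
  have hBcard : (Nat.card {S : Finset (Fin n) // PB S}) = B.card := by
    rw [Nat.card_eq_fintype_card, Fintype.card_subtype]
  rw [hBcard]
  rw [hAcard] at hhalf
  -- first get k ≤ t using some good T (nonempty since choose n (2t) > 0)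
  have hchoosepos : 0 < n.choose (2 * t) := Nat.choose_pos hn
  have hApos : 0 < A.card := by
    by_contra h
    push_neg at h
    have : A.card = 0 := Nat.le_zero.mp h
    rw [this] at hhalf
    have : (0:ℝ) < (n.choose (2*t) : ℝ) / 2 := by positivity
    simp at hhalf
    linarith
  obtain ⟨T0, hT0⟩ := Finset.card_pos.mp hApos
  have hT0' := (Finset.mem_filter.mp hT0).2
  have hkt : k ≤ t := (good_contains_homog F t k hTK G T0 hT0'.2).1
  have hk2t : k ≤ 2 * t := hkt.trans (by omega)
  -- double counting: A.card * 1 ≤ B.card * (n-k).choose (2*t-k)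
  have hcount : A.card * 1 ≤ B.card * ((n-k).choose (2*t-k)) := by
    apply Finset.card_mul_le_card_mul (fun T K => K ⊆ T)
    · intro T hT
      obtain ⟨hTcard, hTgood⟩ := (Finset.mem_filter.mp hT).2
      obtain ⟨_, K, hKT, hKcard, hKhom⟩ := good_contains_homog F t k hTK G T hTgood
      have hne : (Finset.bipartiteAbove (fun T K => K ⊆ T) B T).Nonempty :=
        ⟨K, (Finset.mem_bipartiteAbove _).mpr ⟨Finset.mem_filter.mpr
          ⟨Finset.mem_univ K, hKcard, hKhom⟩, hKT⟩⟩
      exact hne.card_pos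
    · intro K hK
      have hKcard : K.card = k := ((Finset.mem_filter.mp hK).2).1
      have hbound : (Finset.bipartiteBelow (fun T K => K ⊆ T) A K).card ≤
          ((Finset.univ \ K).powersetCard (2*t - k)).card := by
        apply Finset.card_le_card_of_injOn (fun T => T \ K)
        · intro T hT
          obtain ⟨hTA, hKT⟩ := (Finset.mem_bipartiteBelow _).mp hT
          have hTcard : T.card = 2 * t := ((Finset.mem_filter.mp hTA).2).1
          simp only [Finset.mem_coe, Finset.mem_powersetCard]
          constructor
          · intro x hx
            rw [Finset.mem_sdiff] at hx ⊢
            exact ⟨Finset.mem_univ x, hx.2⟩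
          · rw [Finset.card_sdiff_of_subset hKT, hTcard, hKcard]
        · intro T1 hT1 T2 hT2 h12
          have h1 : K ⊆ T1 := ((Finset.mem_bipartiteBelow _).mp (Finset.mem_coe.mp hT1)).2
          have h2 : K ⊆ T2 := ((Finset.mem_bipartiteBelow _).mp (Finset.mem_coe.mp hT2)).2
          have h12' : T1 \ K = T2 \ K := h12
          rw [← Finset.sdiff_union_of_subset h1, ← Finset.sdiff_union_of_subset h2, h12']
      calc (Finset.bipartiteBelow (fun T K => K ⊆ T) A K).card
          ≤ ((Finset.univ \ K).powersetCard (2*t - k)).card := hbound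
        _ = (n - k).choose (2*t - k) := by
            rw [Finset.card_powersetCard, Finset.card_sdiff_of_subset (Finset.subset_univ K),
              Finset.card_univ, Fintype.card_fin, hKcard]
  rw [mul_one] at hcount
  -- the binomial ratio bound
  have hratio := ratio_pow_le k n (2*t) hk2t hn
  have hcast2t : ((2*t : ℕ) : ℝ) = 2 * (t:ℝ) := by push_cast; ring
  rw [hcast2t] at hratio
  have hDpos : (0:ℝ) < ((n-k).choose (2*t-k) : ℕ) := by
    exact_mod_cast Nat.choose_pos (by omega)
  have hAR : (n.choose (2*t) : ℝ) ≤ 2 * A.card := by linarith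
  have hAB : (A.card : ℝ) ≤ (B.card : ℝ) * ((n-k).choose (2*t-k) : ℕ) := by
    exact_mod_cast hcount
  have hchain : ((n:ℝ) / (2*t)) ^ k * ((n-k).choose (2*t-k) : ℕ) ≤
      2 * (B.card : ℝ) * ((n-k).choose (2*t-k) : ℕ) := by
    calc ((n:ℝ) / (2*t)) ^ k * ((n-k).choose (2*t-k) : ℕ)
        ≤ (n.choose (2*t) : ℕ) := hratio
      _ ≤ 2 * (A.card : ℝ) := hAR
      _ ≤ 2 * ((B.card : ℝ) * ((n-k).choose (2*t-k) : ℕ)) := by linarith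
      _ = 2 * (B.card : ℝ) * ((n-k).choose (2*t-k) : ℕ) := by ring
  have : ((n:ℝ) / (2*t)) ^ k ≤ 2 * (B.card : ℝ) :=
    le_of_mul_le_mul_right hchain hDpos
  linarith
end

section
/- Let H be a graph on h vertices and let t, k be positive integers such that every H-free graph has the (t,k)-homogeneous property. If a graph G on n ≥ 2t vertices has at most n^h/(2^{h+1}·t^{h−1}) induced copies of H, then G contains at least (1/2)·(n/(2t))^k homogeneous sets of size k. -/
/-- The number of induced copies of `H` in `G`. -/
noncomputable def inducedCopyCount {h : ℕ} {V : Type} [Fintype V]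
    (H : SimpleGraph (Fin h)) (G : SimpleGraph V) : ℕ :=
  Nat.card {U : Finset V // Nonempty (H ≃g G.induce (U : Set V))}

open Finset

lemma ratio_pow : ∀ (k a n : ℕ), k ≤ a → a ≤ n →
    ((n:ℝ)/a)^k * (((n-k).choose (a-k) : ℕ) : ℝ) ≤ (n.choose a : ℝ) := by
  intro k
  induction k with
  | zero => intro a n _ _; simp
  | succ k ih =>
    intro a n hka han
    have ha1 : 1 ≤ a := le_trans (Nat.succ_le_succ (Nat.zero_le k)) hka
    have hn1 : 1 ≤ n := le_trans ha1 han
    have key : (n : ℝ) * ((n-1).choose (a-1)) = (a : ℝ) * (n.choose a) := by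
      have hnat := Nat.add_one_mul_choose_eq (n-1) (a-1)
      have e : n - 1 + 1 = n := by omega
      have e' : a - 1 + 1 = a := by omega
      simp only [Nat.succ_eq_add_one, e, e'] at hnat
      have : n * (n-1).choose (a-1) = a * n.choose a := by rw [hnat]; ring
      exact_mod_cast congrArg (Nat.cast (R := ℝ)) this
    have ih' := ih (a-1) (n-1) (by omega) (by omega)
    have e1 : (n-1) - k = n - (k+1) := by omega
    have e2 : (a-1) - k = a - (k+1) := by omega
    rw [e1, e2] at ih'
    have hc1 : ((n-1 : ℕ) : ℝ) = (n : ℝ) - 1 := by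
      rw [Nat.cast_sub hn1]; norm_num
    have hc2 : ((a-1 : ℕ) : ℝ) = (a : ℝ) - 1 := by
      rw [Nat.cast_sub ha1]; norm_num
    rw [hc1, hc2] at ih'
    have hapos : (0:ℝ) < a := by exact_mod_cast ha1
    have hnpos : (0:ℝ) < n := by exact_mod_cast hn1
    have hmono : ((n:ℝ)/a) ≤ ((n:ℝ)-1)/((a:ℝ)-1) ∨ a = 1 := by
      rcases eq_or_lt_of_le ha1 with h1 | h1
      · right; omega
      · left
        have ha1' : (0:ℝ) < (a:ℝ) - 1 := by
          have : (1:ℝ) < a := by exact_mod_cast h1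
          linarith
        rw [div_le_div_iff₀ hapos ha1']
        have : (a:ℝ) ≤ n := by exact_mod_cast han
        nlinarith
    rcases hmono with hmono | ha1'
    · have hnn : (0:ℝ) ≤ (n:ℝ)/a := le_of_lt (div_pos hnpos hapos)
      have hpow : ((n:ℝ)/a)^k ≤ (((n:ℝ)-1)/((a:ℝ)-1))^k := pow_le_pow_left₀ hnn hmono k
      have hcnn : (0:ℝ) ≤ ((n-(k+1)).choose (a-(k+1)) : ℕ) := Nat.cast_nonneg _
      calc ((n:ℝ)/a)^(k+1) * ((n-(k+1)).choose (a-(k+1)) : ℕ)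
          = ((n:ℝ)/a) * (((n:ℝ)/a)^k * ((n-(k+1)).choose (a-(k+1)) : ℕ)) := by ring
        _ ≤ ((n:ℝ)/a) * ((((n:ℝ)-1)/((a:ℝ)-1))^k * ((n-(k+1)).choose (a-(k+1)) : ℕ)) := by
            apply mul_le_mul_of_nonneg_left _ hnn
            exact mul_le_mul_of_nonneg_right hpow hcnn
        _ ≤ ((n:ℝ)/a) * ((n-1).choose (a-1)) := mul_le_mul_of_nonneg_left ih' hnn
        _ = (n.choose a : ℝ) := by
            rw [div_mul_eq_mul_div, key, mul_comm, mul_div_assoc, div_self (ne_of_gt hapos), mul_one]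
    · subst ha1'
      have hk0 : k = 0 := by omega
      subst hk0
      simp only [pow_one, Nat.choose_one_right]
      norm_num

lemma superset_count {V : Type} [Fintype V] [DecidableEq V] (S : Finset V) (a : ℕ)
    (p : Finset V → Prop) [DecidablePred p] :
    ((Finset.powersetCard a (Finset.univ : Finset V)).filter (fun W => p W ∧ S ⊆ W)).card
      ≤ (Fintype.card V - S.card).choose (a - S.card) := by
  classical
  by_cases hsa : S.card ≤ a
  · have : ((Finset.powersetCard a (Finset.univ : Finset V)).filter (fun W => p W ∧ S ⊆ W)).card
        ≤ (Finset.powersetCard (a - S.card) (Finset.univ \ S)).card := by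
      apply Finset.card_le_card_of_injOn (fun W => W \ S)
      · intro W hW
        simp only [Finset.mem_coe, Finset.mem_filter, Finset.mem_powersetCard] at hW ⊢
        obtain ⟨⟨-, hcard⟩, -, hSW⟩ := hW
        refine ⟨Finset.sdiff_subset_sdiff (Finset.subset_univ _) le_rfl, ?_⟩
        rw [Finset.card_sdiff_of_subset hSW, hcard]
      · intro W1 h1 W2 h2 heq
        simp only [Finset.mem_coe, Finset.mem_filter] at h1 h2
        have e1 : W1 = (W1 \ S) ∪ S := (Finset.sdiff_union_of_subset h1.2.2).symm
        have e2 : W2 = (W2 \ S) ∪ S := (Finset.sdiff_union_of_subset h2.2.2).symm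
        simp only at heq
        rw [e1, e2, heq]
    rw [Finset.card_powersetCard] at this
    rwa [Finset.card_sdiff_of_subset (Finset.subset_univ _), Finset.card_univ] at this
  · have : ((Finset.powersetCard a (Finset.univ : Finset V)).filter (fun W => p W ∧ S ⊆ W)) = ∅ := by
      apply Finset.filter_false_of_mem
      intro W hW hSW
      rw [Finset.mem_powersetCard] at hW
      exact hsa (hW.2 ▸ Finset.card_le_card hSW.2)
    simp [this]

lemma copy_of_maps {h n : ℕ} {H : SimpleGraph (Fin h)} {G : SimpleGraph (Fin n)}
    (f : Fin h → Fin n) (hinj : Function.Injective f)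
    (hadj : ∀ i j, G.Adj (f i) (f j) ↔ H.Adj i j) :
    Nonempty (H ≃g G.induce ((Finset.image f Finset.univ : Finset (Fin n)) : Set (Fin n))) := by
  classical
  have hmem : ∀ i, f i ∈ ((Finset.image f Finset.univ : Finset (Fin n)) : Set (Fin n)) := by
    intro i; simp
  refine ⟨⟨Equiv.ofBijective (fun i => ⟨f i, hmem i⟩) ⟨?_, ?_⟩, ?_⟩⟩
  · intro i j hij
    exact hinj (congrArg Subtype.val hij)
  · rintro ⟨x, hx⟩
    simp only [Finset.coe_image, Set.mem_image, Finset.mem_coe, Finset.coe_univ, Set.image_univ,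
      Set.mem_range] at hx
    obtain ⟨i, hi⟩ := hx
    exact ⟨i, by simp [hi]⟩
  · intro i j
    simp only [Equiv.ofBijective_apply, SimpleGraph.comap_adj, Function.Embedding.coe_subtype]
    exact hadj i j

/-- If every `H`-free graph has the `(t,k)`-homogeneous property and `G` on `n ≥ 2t`
vertices has at most `n^h/(2^(h+1)·t^(h-1))` induced copies of `H`, then `G` contains at
least `(1/2)·(n/(2t))^k` homogeneous sets of size `k`. -/
theorem count_homog_sets_from_few_copies
    {h : ℕ} (H : SimpleGraph (Fin h)) (t k : ℕ) (ht : 0 < t) (hk : 0 < k)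
    (hTK : ∀ m : ℕ, ∀ G : SimpleGraph (Fin m), IsEmpty (H ↪g G) → TKHomog t k G)
    (n : ℕ) (hn : 2 * t ≤ n) (G : SimpleGraph (Fin n))
    (hcopies : (inducedCopyCount H G : ℝ) ≤
      (n : ℝ) ^ h / ((2 : ℝ) ^ (h + 1) * (t : ℝ) ^ (h - 1))) :
    (1 / 2 : ℝ) * ((n : ℝ) / (2 * t)) ^ k ≤
      (Nat.card {S : Finset (Fin n) // S.card = k ∧ IsHomog G S} : ℝ) := by
  classical
  have hn0 : 0 < n := by omega
  set a := 2 * t with ha_def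
  -- dispose of h = 0
  rcases Nat.eq_zero_or_pos h with rfl | hh
  · exfalso
    have hne : Nonempty {U : Finset (Fin n) // Nonempty (H ≃g G.induce ((U : Set (Fin n))))} := by
      haveI hie : IsEmpty (((∅ : Finset (Fin n)) : Set (Fin n))) := ⟨fun x => by simpa using x.2⟩
      refine ⟨⟨∅, ⟨⟨Equiv.equivOfIsEmpty _ _, ?_⟩⟩⟩⟩
      · intro i; exact i.elim0
    have h1 : 1 ≤ inducedCopyCount H G := Nat.one_le_iff_ne_zero.mpr (Nat.card_ne_zero.mpr ⟨hne, inferInstance⟩)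
    have h1' : (1:ℝ) ≤ (inducedCopyCount H G : ℝ) := by exact_mod_cast h1
    simp only [pow_zero, Nat.zero_sub, pow_one] at hcopies
    norm_num at hcopies
    linarith
  -- main case
  set P : Finset (Fin n) → Prop := fun U => Nonempty (H ≃g G.induce ((U : Set (Fin n)))) with hP_def
  have hPcard : ∀ U : Finset (Fin n), P U → U.card = h := by
    intro U ⟨iso⟩
    have := Fintype.card_congr iso.toEquiv
    simpa using this.symm
  set allCopies : Finset (Finset (Fin n)) := Finset.univ.filter P with hAC_def
  have hcount : inducedCopyCount H G = allCopies.card := by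
    rw [inducedCopyCount, Nat.card_eq_fintype_card, Fintype.card_subtype]
  set 𝒲 : Finset (Finset (Fin n)) := Finset.powersetCard a Finset.univ with hW_def
  set X : Finset (Fin n) → ℕ := fun W => (W.powerset.filter P).card with hX_def
  -- Step 1 : double counting
  have step1 : ∑ W ∈ 𝒲, X W ≤ allCopies.card * (n - h).choose (a - h) := by
    have hfl : ∀ W : Finset (Fin n), W.powerset.filter P = allCopies.filter (fun U => U ⊆ W) := by
      intro W
      ext U
      simp only [Finset.mem_filter, Finset.mem_powerset, hAC_def, Finset.mem_univ, true_and]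
      tauto
    have : ∑ W ∈ 𝒲, X W = ∑ U ∈ allCopies, (𝒲.filter (fun W => U ⊆ W)).card := by
      simp only [hX_def]
      calc ∑ W ∈ 𝒲, (W.powerset.filter P).card
          = ∑ W ∈ 𝒲, ∑ U ∈ allCopies, (if U ⊆ W then 1 else 0) := by
            apply Finset.sum_congr rfl
            intro W _
            rw [hfl W, Finset.card_filter]
        _ = ∑ U ∈ allCopies, ∑ W ∈ 𝒲, (if U ⊆ W then 1 else 0) := Finset.sum_comm
        _ = ∑ U ∈ allCopies, (𝒲.filter (fun W => U ⊆ W)).card := by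
            apply Finset.sum_congr rfl
            intro U _
            rw [Finset.card_filter]
    rw [this]
    have hb : ∀ U ∈ allCopies, (𝒲.filter (fun W => U ⊆ W)).card ≤ (n - h).choose (a - h) := by
      intro U hU
      have hUc : U.card = h := hPcard U (by simpa [hAC_def] using (Finset.mem_filter.mp hU).2)
      have := superset_count U a (fun _ => True)
      simp only [true_and] at this
      rw [hUc, Fintype.card_fin] at this
      exact this
    calc ∑ U ∈ allCopies, (𝒲.filter (fun W => U ⊆ W)).card
        ≤ ∑ U ∈ allCopies, (n - h).choose (a - h) := Finset.sum_le_sum hb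
      _ = allCopies.card * (n - h).choose (a - h) := by rw [Finset.sum_const, smul_eq_mul]
  -- Bad and Good sets
  set Bad : Finset (Finset (Fin n)) := 𝒲.filter (fun W => ¬ X W ≤ t) with hBad_def
  set Good : Finset (Finset (Fin n)) := 𝒲.filter (fun W => X W ≤ t) with hGood_def
  have hsplit : Good.card + Bad.card = n.choose a := by
    rw [hGood_def, hBad_def, Finset.card_filter_add_card_filter_not,
      hW_def, Finset.card_powersetCard, Finset.card_univ, Fintype.card_fin]
  have step2a : Bad.card * (t+1) ≤ ∑ W ∈ 𝒲, X W := by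
    calc Bad.card * (t+1) = ∑ _W ∈ Bad, (t+1) := by rw [Finset.sum_const, smul_eq_mul]
      _ ≤ ∑ W ∈ Bad, X W := by
          apply Finset.sum_le_sum
          intro W hW
          have := (Finset.mem_filter.mp hW).2
          omega
      _ ≤ ∑ W ∈ 𝒲, X W := Finset.sum_le_sum_of_subset (Finset.filter_subset _ _)
  -- Key real inequality : Bad.card ≤ choose(n,a)/2
  have key2 : (Bad.card : ℝ) ≤ (n.choose a : ℝ) / 2 := by
    by_cases hha : h ≤ a
    · -- use ratio_pow with exponent h
      have hr : ((n:ℝ)/a)^h * ((n-h).choose (a-h) : ℝ) ≤ (n.choose a : ℝ) :=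
        ratio_pow h a n hha hn
      have hBa : (Bad.card : ℝ) * (t+1) ≤ (allCopies.card : ℝ) * ((n-h).choose (a-h) : ℝ) := by
        have := le_trans step2a step1
        exact_mod_cast this
      have hcop : (allCopies.card : ℝ) ≤ (n:ℝ)^h / ((2:ℝ)^(h+1) * (t:ℝ)^(h-1)) := by
        rw [← hcount]; exact hcopies
      have htpos : (0:ℝ) < t := by exact_mod_cast ht
      have hapos : (0:ℝ) < (a:ℝ) := by
        have : 0 < a := by omega
        exact_mod_cast this
      have hnpos : (0:ℝ) < (n:ℝ) := by exact_mod_cast hn0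
      have hM : (0:ℝ) ≤ ((n-h).choose (a-h) : ℝ) := Nat.cast_nonneg _
      -- n^h = (n/a)^h * a^h
      have hnh : (n:ℝ)^h = ((n:ℝ)/a)^h * (a:ℝ)^h := by
        rw [div_pow, div_mul_cancel₀]
        exact pow_ne_zero _ (ne_of_gt hapos)
      -- a^h = 2^h * t^h and t^h = t^(h-1)*t
      have hah : (a:ℝ)^h = 2^h * (t:ℝ)^(h-1) * t := by
        have : (a:ℝ) = 2 * t := by rw [ha_def]; push_cast; ring
        rw [this, mul_pow]
        have : (t:ℝ)^h = (t:ℝ)^(h-1) * t := by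
          rw [← pow_succ]
          congr 1
          omega
        rw [this]; ring
      have hdenpos : (0:ℝ) < (2:ℝ)^(h+1) * (t:ℝ)^(h-1) := by positivity
      -- chain
      have c1 : (Bad.card : ℝ) * (t+1) ≤ ((n:ℝ)^h / ((2:ℝ)^(h+1) * (t:ℝ)^(h-1))) * ((n-h).choose (a-h) : ℝ) :=
        le_trans hBa (mul_le_mul_of_nonneg_right hcop hM)
      have hahnn : (0:ℝ) ≤ (a:ℝ)^h := by positivity
      have hmul : (n:ℝ)^h * ((n-h).choose (a-h) : ℝ) ≤ (a:ℝ)^h * (n.choose a : ℝ) := by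
        rw [hnh]
        calc ((n:ℝ)/a)^h * (a:ℝ)^h * ((n-h).choose (a-h) : ℝ)
            = (a:ℝ)^h * (((n:ℝ)/a)^h * ((n-h).choose (a-h) : ℝ)) := by ring
          _ ≤ (a:ℝ)^h * (n.choose a : ℝ) := mul_le_mul_of_nonneg_left hr hahnn
      have c2 : ((n:ℝ)^h / ((2:ℝ)^(h+1) * (t:ℝ)^(h-1))) * ((n-h).choose (a-h) : ℝ)
          ≤ ((a:ℝ)^h / ((2:ℝ)^(h+1) * (t:ℝ)^(h-1))) * (n.choose a : ℝ) := by
        rw [div_mul_eq_mul_div, div_mul_eq_mul_div]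
        exact (div_le_div_iff_of_pos_right hdenpos).mpr hmul
      have c3 : ((a:ℝ)^h / ((2:ℝ)^(h+1) * (t:ℝ)^(h-1))) = (t:ℝ)/2 := by
        rw [hah]
        rw [pow_succ]
        field_simp
      have hN : (0:ℝ) ≤ (n.choose a : ℝ) := Nat.cast_nonneg _
      have c4 : (Bad.card : ℝ) * (t+1) ≤ ((t:ℝ)/2) * (n.choose a : ℝ) := by
        calc (Bad.card : ℝ) * (t+1) ≤ _ := c1
          _ ≤ _ := c2
          _ = ((t:ℝ)/2) * (n.choose a : ℝ) := by rw [c3]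
      have ht1 : (0:ℝ) < (t:ℝ) + 1 := by linarith
      rw [← le_div_iff₀ ht1] at c4
      calc (Bad.card : ℝ) ≤ ((t:ℝ)/2) * (n.choose a : ℝ) / ((t:ℝ)+1) := c4
        _ ≤ (n.choose a : ℝ) / 2 := by
            rw [div_le_div_iff₀ ht1 (by norm_num : (0:ℝ) < 2)]
            nlinarith
    · -- h > a : no copies fit, Bad is empty
      have hzero : ∑ W ∈ 𝒲, X W = 0 := by
        apply Finset.sum_eq_zero
        intro W hW
        rw [hX_def]
        simp only
        rw [Finset.card_eq_zero]
        apply Finset.filter_false_of_mem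
        intro U hU hPU
        have h1 : U.card = h := hPcard U hPU
        have h2 : U ⊆ W := Finset.mem_powerset.mp hU
        rw [hW_def, Finset.mem_powersetCard] at hW
        have h3 : W.card = a := hW.2
        have := Finset.card_le_card h2
        omega
      have hble : Bad.card * (t+1) = 0 := by
        have h6 := step2a
        rw [hzero] at h6
        exact Nat.le_zero.mp h6
      have hb0 : Bad.card = 0 := by
        rcases Nat.mul_eq_zero.mp hble with h5 | h5
        · exact h5
        · omega
      rw [hb0]
      simp only [Nat.cast_zero]
      positivity
  -- Step 3 : every good W contains a homogeneous k-set
  have step3 : ∀ W ∈ Good, ∃ S, S ⊆ W ∧ S.card = k ∧ IsHomog G S := by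
    intro W hWG
    have hWmem : W ∈ 𝒲 := (Finset.mem_filter.mp hWG).1
    have hXW : X W ≤ t := (Finset.mem_filter.mp hWG).2
    have hWcard : W.card = a := by
      rw [hW_def, Finset.mem_powersetCard] at hWmem
      exact hWmem.2
    set u : Finset (Fin n) → Fin n := fun U => if hU : U.Nonempty then hU.choose else ⟨0, hn0⟩ with hu_def
    have hu_mem : ∀ U : Finset (Fin n), U.Nonempty → u U ∈ U := by
      intro U hU
      rw [hu_def]
      simp only [dif_pos hU]
      exact hU.choose_spec
    set CW : Finset (Finset (Fin n)) := W.powerset.filter P with hCW_def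
    have hCWne : ∀ U ∈ CW, U.Nonempty := by
      intro U hU
      have : U.card = h := hPcard U (Finset.mem_filter.mp hU).2
      rw [← Finset.card_pos, this]; exact hh
    set D : Finset (Fin n) := CW.image u with hD_def
    have hDW : D ⊆ W := by
      intro x hx
      obtain ⟨U, hU, rfl⟩ := Finset.mem_image.mp hx
      exact (Finset.mem_powerset.mp (Finset.mem_filter.mp hU).1) (hu_mem U (hCWne U hU))
    have hDcard : D.card ≤ t := le_trans (Finset.card_image_le) hXW
    have hW'card : t ≤ (W \ D).card := by
      rw [Finset.card_sdiff_of_subset hDW, hWcard]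
      omega
    obtain ⟨T, hTW', hTcard⟩ := Finset.exists_subset_card_eq hW'card
    have hTfree : ∀ U : Finset (Fin n), U ⊆ T → ¬ P U := by
      intro U hUT hPU
      have hUW : U ⊆ W := hUT.trans (hTW'.trans Finset.sdiff_subset)
      have hUCW : U ∈ CW := Finset.mem_filter.mpr ⟨Finset.mem_powerset.mpr hUW, hPU⟩
      have h1 : u U ∈ D := Finset.mem_image_of_mem u hUCW
      have h2 : u U ∈ W \ D := hTW' (hUT (hu_mem U (hCWne U hUCW)))
      exact (Finset.mem_sdiff.mp h2).2 h1
    -- build the graph on Fin t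
    set e : Fin t ≃ {x // x ∈ T} := (T.equivFin.trans (finCongr hTcard)).symm with he_def
    set c : Fin t → Fin n := fun i => (e i : Fin n) with hc_def
    have hcinj : Function.Injective c := by
      intro i j hij
      exact e.injective (Subtype.ext hij)
    have hcT : ∀ i, c i ∈ T := fun i => (e i).2
    set G' : SimpleGraph (Fin t) := G.comap c with hG'_def
    have hfree : IsEmpty (H ↪g G') := by
      constructor
      intro f
      set F : Fin h → Fin n := fun i => c (f i) with hF_def
      have hFinj : Function.Injective F := hcinj.comp f.injective
      have hFadj : ∀ i j, G.Adj (F i) (F j) ↔ H.Adj i j := by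
        intro i j
        have h1 : G'.Adj (f i) (f j) ↔ H.Adj i j := f.map_rel_iff
        rw [← h1]
        rfl
      have hcopy := copy_of_maps F hFinj hFadj
      apply hTfree (Finset.image F Finset.univ) _ hcopy
      intro x hx
      obtain ⟨i, _, rfl⟩ := Finset.mem_image.mp hx
      exact hcT (f i)
    obtain ⟨S', hS'sub, hS'card, hS'hom⟩ := hTK t G' hfree Finset.univ (by simp)
    refine ⟨S'.image c, ?_, ?_, ?_⟩
    · intro x hx
      obtain ⟨i, _, rfl⟩ := Finset.mem_image.mp hx
      exact (hTW'.trans Finset.sdiff_subset) (hcT i)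
    · rw [Finset.card_image_of_injective _ hcinj, hS'card]
    · rcases hS'hom with hcl | hcl
      · left
        intro x hx y hy hxy
        obtain ⟨i, hi, rfl⟩ := Finset.mem_image.mp (Finset.mem_coe.mp hx)
        obtain ⟨j, hj, rfl⟩ := Finset.mem_image.mp (Finset.mem_coe.mp hy)
        have hij : i ≠ j := fun hij => hxy (by rw [hij])
        exact hcl (Finset.mem_coe.mpr hi) (Finset.mem_coe.mpr hj) hij
      · right
        intro x hx y hy hxy
        obtain ⟨i, hi, rfl⟩ := Finset.mem_image.mp (Finset.mem_coe.mp hx)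
        obtain ⟨j, hj, rfl⟩ := Finset.mem_image.mp (Finset.mem_coe.mp hy)
        have hij : i ≠ j := fun hij => hxy (by rw [hij])
        have := hcl (Finset.mem_coe.mpr hi) (Finset.mem_coe.mpr hj) hij
        rw [SimpleGraph.compl_adj] at this ⊢
        exact ⟨hxy, this.2⟩
  -- Step 4 : double counting homogeneous sets
  set homogF : Finset (Finset (Fin n)) := Finset.univ.filter (fun S => S.card = k ∧ IsHomog G S)
    with hhF_def
  set Φ : Finset (Fin n) → Finset (Fin n) := fun W =>
    if hW : ∃ S, S ⊆ W ∧ S.card = k ∧ IsHomog G S then hW.choose else ∅ with hPhi_def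
  have hPhi_spec : ∀ W ∈ Good, Φ W ⊆ W ∧ (Φ W).card = k ∧ IsHomog G (Φ W) := by
    intro W hW
    have hex := step3 W hW
    rw [hPhi_def]
    simp only [dif_pos hex]
    exact hex.choose_spec
  have hmap : ∀ W ∈ Good, Φ W ∈ homogF := by
    intro W hW
    obtain ⟨-, h2, h3⟩ := hPhi_spec W hW
    rw [hhF_def]
    exact Finset.mem_filter.mpr ⟨Finset.mem_univ _, h2, h3⟩
  have step4 : Good.card ≤ homogF.card * (n - k).choose (a - k) := by
    rw [Finset.card_eq_sum_card_fiberwise hmap]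
    have hb : ∀ S ∈ homogF, (Good.filter (fun W => Φ W = S)).card ≤ (n - k).choose (a - k) := by
      intro S hS
      have hScard : S.card = k := (Finset.mem_filter.mp hS).2.1
      have hsub : Good.filter (fun W => Φ W = S) ⊆
          𝒲.filter (fun W => X W ≤ t ∧ S ⊆ W) := by
        intro W hW
        obtain ⟨hWG, hPhiW⟩ := Finset.mem_filter.mp hW
        refine Finset.mem_filter.mpr ⟨(Finset.mem_filter.mp hWG).1,
          (Finset.mem_filter.mp hWG).2, ?_⟩
        rw [← hPhiW]
        exact (hPhi_spec W hWG).1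
      have := superset_count S a (fun W => X W ≤ t)
      rw [hScard, Fintype.card_fin] at this
      calc (Good.filter (fun W => Φ W = S)).card
          ≤ (𝒲.filter (fun W => X W ≤ t ∧ S ⊆ W)).card := Finset.card_le_card hsub
        _ ≤ (n - k).choose (a - k) := this
    calc ∑ S ∈ homogF, (Good.filter (fun W => Φ W = S)).card
        ≤ ∑ S ∈ homogF, (n - k).choose (a - k) := Finset.sum_le_sum hb
      _ = homogF.card * (n - k).choose (a - k) := by rw [Finset.sum_const, smul_eq_mul]
  -- finish
  have hNpos : 0 < n.choose a := Nat.choose_pos hn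
  have key3 : (n.choose a : ℝ) / 2 ≤ (Good.card : ℝ) := by
    have : (Good.card : ℝ) + (Bad.card : ℝ) = (n.choose a : ℝ) := by exact_mod_cast hsplit
    linarith
  -- Good is nonempty, giving k ≤ a
  have hGoodne : Good.Nonempty := by
    rw [← Finset.card_pos]
    by_contra hcon
    push_neg at hcon
    have h0 : Good.card = 0 := by omega
    rw [h0] at key3
    have hNp : (0:ℝ) < (n.choose a : ℝ) := by exact_mod_cast hNpos
    simp only [Nat.cast_zero] at key3
    linarith
  have hka : k ≤ a := by
    obtain ⟨W, hW⟩ := hGoodne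
    obtain ⟨h1, h2, -⟩ := hPhi_spec W hW
    have hWcard : W.card = a := by
      have h5 := (Finset.mem_filter.mp hW).1
      rw [hW_def, Finset.mem_powersetCard] at h5
      exact h5.2
    calc k = (Φ W).card := h2.symm
      _ ≤ W.card := Finset.card_le_card h1
      _ = a := hWcard
  have hrk : ((n:ℝ)/a)^k * ((n-k).choose (a-k) : ℝ) ≤ (n.choose a : ℝ) :=
    ratio_pow k a n hka hn
  have hKpos : 0 < (n-k).choose (a-k) := Nat.choose_pos (by omega)
  have hKpos' : (0:ℝ) < ((n-k).choose (a-k) : ℝ) := by exact_mod_cast hKpos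
  have hfinal : Nat.card {S : Finset (Fin n) // S.card = k ∧ IsHomog G S} = homogF.card := by
    rw [Nat.card_eq_fintype_card, Fintype.card_subtype]
  rw [hfinal]
  have hGle : (Good.card : ℝ) ≤ (homogF.card : ℝ) * ((n-k).choose (a-k) : ℝ) := by
    exact_mod_cast step4
  have hchain : (1/2 : ℝ) * ((n:ℝ)/a)^k * ((n-k).choose (a-k) : ℝ)
      ≤ (homogF.card : ℝ) * ((n-k).choose (a-k) : ℝ) := by
    calc (1/2 : ℝ) * ((n:ℝ)/a)^k * ((n-k).choose (a-k) : ℝ)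
        = (1/2 : ℝ) * (((n:ℝ)/a)^k * ((n-k).choose (a-k) : ℝ)) := by ring
      _ ≤ (1/2 : ℝ) * (n.choose a : ℝ) := by linarith [hrk]
      _ = (n.choose a : ℝ) / 2 := by ring
      _ ≤ (Good.card : ℝ) := key3
      _ ≤ _ := hGle
  have := le_of_mul_le_mul_right (by linarith [hchain] : (1/2 : ℝ) * ((n:ℝ)/a)^k * ((n-k).choose (a-k) : ℝ) ≤ (homogF.card : ℝ) * ((n-k).choose (a-k) : ℝ)) hKpos'
  have hcast : ((a:ℕ):ℝ) = 2 * (t:ℝ) := by rw [ha_def]; push_cast; ring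
  calc (1/2 : ℝ) * ((n:ℝ)/(2*(t:ℝ)))^k = (1/2 : ℝ) * ((n:ℝ)/(a:ℝ))^k := by rw [hcast]
    _ ≤ (homogF.card : ℝ) := by
        have h' : (1/2 : ℝ) * ((n:ℝ)/a)^k ≤ (homogF.card : ℝ) := this
        exact h'
end

section
/- Let r ≥ 2 and ℓ ≥ 0 be integers, let k ≥ (r−1)·ℓ be an integer, let u, n be positive integers, and let 0 < ε ≤ 1 be a real number such that (1−ε)^ℓ·n ≤ u. Let G be an r-uniform hypergraph on n vertices such that every vertex subset S with |S| > u contains a vertex whose degree in the induced subhypergraph G[S] is at least ε·(|S|−1)^{r−1}. Then the number of independent sets of size k in G is at most C(n,(r−1)ℓ)·C(u,k−(r−1)ℓ), where C(a,b) denotes the binomial coefficient. -/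
open Finset

section Aux
variable {V : Type} [LinearOrder V]

noncomputable def hlink (v : V) (H : Finset (Finset V)) : Finset (Finset V) :=
  (H.filter (fun e => v ∈ e)).image (fun e => e.erase v)

noncomputable def hdg (H : Finset (Finset V)) (w : V) : ℕ := (H.filter (fun e => w ∈ e)).card

lemma hlink_card (v : V) (H : Finset (Finset V)) : (hlink v H).card = hdg H v := by
  classical
  apply Finset.card_image_of_injOn
  intro e he e' he' h
  simp only [mem_coe, mem_filter] at he he'
  rw [← Finset.insert_erase he.2, show e.erase v = e'.erase v from h, Finset.insert_erase he'.2]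

lemma mem_hlink {v : V} {H : Finset (Finset V)} {e' : Finset V} :
    e' ∈ hlink v H ↔ ∃ e ∈ H, v ∈ e ∧ e' = e.erase v := by
  simp [hlink, eq_comm, and_assoc]

lemma sum_hdg {T : Finset V} {H : Finset (Finset V)} {s : ℕ}
    (h1 : ∀ e ∈ H, e ⊆ T) (h2 : ∀ e ∈ H, e.card = s) :
    ∑ w ∈ T, hdg H w = s * H.card := by
  classical
  unfold hdg
  simp_rw [Finset.card_filter]
  rw [Finset.sum_comm]
  calc ∑ e ∈ H, ∑ w ∈ T, (if w ∈ e then 1 else 0)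
      = ∑ _e ∈ H, s := by
        refine Finset.sum_congr rfl fun e he => ?_
        rw [← Finset.card_filter]
        have he' : T.filter (fun w => w ∈ e) = e := by
          ext x; simp only [mem_filter]
          exact ⟨fun h => h.2, fun h => ⟨h1 e he h, h⟩⟩
        rw [he', h2 e he]
    _ = s * H.card := by rw [Finset.sum_const, smul_eq_mul, mul_comm]

lemma hdg_le_pow {T : Finset V} {H : Finset (Finset V)} {s : ℕ}
    (h1 : ∀ e ∈ H, e ⊆ T) (h2 : ∀ e ∈ H, e.card = s + 1) (w : V) :
    hdg H w ≤ T.card ^ s := by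
  rw [← hlink_card]
  have hsub : hlink w H ⊆ T.powersetCard s := by
    intro e' he'
    obtain ⟨e, he, hw, rfl⟩ := mem_hlink.mp he'
    rw [Finset.mem_powersetCard]
    refine ⟨(Finset.erase_subset _ _).trans (h1 e he), ?_⟩
    rw [Finset.card_erase_of_mem hw, h2 e he]; rfl
  calc (hlink w H).card ≤ (T.powersetCard s).card := Finset.card_le_card hsub
    _ = T.card.choose s := Finset.card_powersetCard _ _
    _ ≤ T.card ^ s := Nat.choose_le_pow _ _

end Aux

section Del
variable {V : Type} [LinearOrder V]

noncomputable def del (ε : ℝ) : ℕ → Finset V → Finset (Finset V) → Finset V → Finset V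
  | 0, _, _, _ => ∅
  | 1, T, H, _ => T.filter (fun x => ({x} : Finset V) ∈ H)
  | (s+2), T, H, F =>
    if h : ((T.filter fun w => ε * (T.card : ℝ) ^ (s+1) ≤ (hdg H w : ℝ)) ∩ F).Nonempty then
      insert (((T.filter fun w => ε * (T.card : ℝ) ^ (s+1) ≤ (hdg H w : ℝ)) ∩ F).min' h)
        (del ε (s+1)
          (T.erase (((T.filter fun w => ε * (T.card : ℝ) ^ (s+1) ≤ (hdg H w : ℝ)) ∩ F).min' h))
          (hlink (((T.filter fun w => ε * (T.card : ℝ) ^ (s+1) ≤ (hdg H w : ℝ)) ∩ F).min' h) H) F)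
    else (T.filter fun w => ε * (T.card : ℝ) ^ (s+1) ≤ (hdg H w : ℝ))

lemma del_subset (ε : ℝ) : ∀ (s : ℕ) (T : Finset V) (H : Finset (Finset V)) (F : Finset V),
    del ε s T H F ⊆ T := by
  intro s
  induction s using Nat.strong_induction_on with
  | _ s ih =>
    match s with
    | 0 => intro T H F; simp [del]
    | 1 => intro T H F; simp only [del]; exact filter_subset _ _
    | (s+2) =>
      intro T H F
      rw [del]
      split
      · rename_i h
        intro x hx
        rcases Finset.mem_insert.mp hx with rfl | hx
        · have := Finset.min'_mem _ h
          exact (Finset.mem_filter.mp (Finset.mem_inter.mp this).1).1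
        · exact Finset.erase_subset _ _ (ih (s+1) (by omega) _ _ _ hx)
      · exact filter_subset _ _

lemma del_card {ε : ℝ} (hε0 : 0 < ε) (hε1 : ε ≤ 1) :
    ∀ (s : ℕ), 1 ≤ s → ∀ (T : Finset V) (H : Finset (Finset V)) (F : Finset V),
    (∀ e ∈ H, e ⊆ T) → (∀ e ∈ H, e.card = s) → ε * (T.card : ℝ) ^ s ≤ (H.card : ℝ) →
    ε * (T.card : ℝ) ≤ ((del ε s T H F).card : ℝ) := by
  intro s
  induction s using Nat.strong_induction_on with
  | _ s ih =>
  match s with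
  | 0 => intro h; omega
  | 1 =>
    intro _ T H F h1 h2 hc
    simp only [del]
    have hle : H.card ≤ (T.filter (fun x => ({x} : Finset V) ∈ H)).card := by
      have hsub : H ⊆ (T.filter (fun x => ({x} : Finset V) ∈ H)).image
          (fun x => ({x} : Finset V)) := by
        intro e he
        obtain ⟨x, rfl⟩ := Finset.card_eq_one.mp (h2 e he)
        exact Finset.mem_image.mpr ⟨x,
          Finset.mem_filter.mpr ⟨h1 _ he (Finset.mem_singleton_self x), he⟩, rfl⟩
      exact le_trans (Finset.card_le_card hsub) Finset.card_image_le
    have : (H.card : ℝ) ≤ ((T.filter (fun x => ({x} : Finset V) ∈ H)).card : ℝ) := by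
      exact_mod_cast hle
    calc ε * (T.card:ℝ) = ε * (T.card:ℝ)^1 := by ring
      _ ≤ (H.card:ℝ) := hc
      _ ≤ _ := this
  | (s+2) =>
    intro _ T H F h1 h2 hc
    rw [del]
    split
    · rename_i h
      set A := T.filter fun w => ε * (T.card : ℝ) ^ (s+1) ≤ (hdg H w : ℝ) with hA
      set w := (A ∩ F).min' h with hwdef
      have hwA : w ∈ A := (Finset.mem_inter.mp ((A ∩ F).min'_mem h)).1
      have hwT : w ∈ T := (Finset.mem_filter.mp hwA).1
      have hwdeg : ε * ((T.card:ℝ))^(s+1) ≤ (hdg H w : ℝ) := (Finset.mem_filter.mp hwA).2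
      have hT1 : (1:ℕ) ≤ T.card := Finset.card_pos.mpr ⟨w, hwT⟩
      have h1' : ∀ e ∈ hlink w H, e ⊆ T.erase w := by
        intro e' he'
        obtain ⟨e, he, hw', rfl⟩ := mem_hlink.mp he'
        exact Finset.erase_subset_erase _ (h1 e he)
      have h2' : ∀ e ∈ hlink w H, e.card = s + 1 := by
        intro e' he'
        obtain ⟨e, he, hw', rfl⟩ := mem_hlink.mp he'
        rw [Finset.card_erase_of_mem hw', h2 e he]
        omega
      have hcard' : ((T.erase w).card : ℝ) = (T.card : ℝ) - 1 := by
        rw [Finset.card_erase_of_mem hwT]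
        push_cast [hT1]
        ring
      have hc' : ε * ((T.erase w).card:ℝ)^(s+1) ≤ ((hlink w H).card:ℝ) := by
        rw [hlink_card]
        refine le_trans (mul_le_mul_of_nonneg_left ?_ hε0.le) hwdeg
        have : (T.erase w).card ≤ T.card := Finset.card_le_card (Finset.erase_subset _ _)
        exact pow_le_pow_left₀ (by positivity) (by exact_mod_cast this) _
      have IH := ih (s+1) (by omega) (by omega) (T.erase w) (hlink w H) F h1' h2' hc'
      have hnotmem : w ∉ del ε (s+1) (T.erase w) (hlink w H) F :=
        fun hmem => (Finset.notMem_erase w T) (del_subset _ _ _ _ _ hmem)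
      rw [Finset.card_insert_of_notMem hnotmem]
      rw [hcard'] at IH
      push_cast
      nlinarith [IH]
    · rename_i h
      set A := T.filter fun w => ε * (T.card : ℝ) ^ (s+1) ≤ (hdg H w : ℝ) with hA
      rcases Nat.eq_zero_or_pos T.card with hm | hm
      · rw [hm]
        simp only [Nat.cast_zero, mul_zero]
        positivity
      · have hmR : (0:ℝ) < (T.card:ℝ) := by exact_mod_cast hm
        have hpow : (0:ℝ) < (T.card:ℝ)^(s+1) := by positivity
        have hsumR : (∑ x ∈ T, (hdg H x : ℝ)) = ((s+2:ℕ):ℝ) * (H.card:ℝ) := by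
          exact_mod_cast congrArg (Nat.cast : ℕ → ℝ) (sum_hdg h1 h2)
        have hsplit : ∑ x ∈ T \ A, (hdg H x:ℝ) + ∑ x ∈ A, (hdg H x:ℝ)
            = ∑ x ∈ T, (hdg H x:ℝ) :=
          Finset.sum_sdiff (Finset.filter_subset _ _)
        have hb1 : ∑ x ∈ A, (hdg H x:ℝ) ≤ (A.card:ℝ) * (T.card:ℝ)^(s+1) := by
          have : ∀ x ∈ A, (hdg H x:ℝ) ≤ (T.card:ℝ)^(s+1) := by
            intro x _
            exact_mod_cast hdg_le_pow h1 (s := s+1) (by exact_mod_cast h2) x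
          calc ∑ x ∈ A, (hdg H x:ℝ) ≤ A.card • ((T.card:ℝ)^(s+1)) :=
                Finset.sum_le_card_nsmul _ _ _ this
            _ = (A.card:ℝ) * (T.card:ℝ)^(s+1) := by rw [nsmul_eq_mul]
        have hb2 : ∑ x ∈ T \ A, (hdg H x:ℝ) ≤ (T.card:ℝ) * (ε * (T.card:ℝ)^(s+1)) := by
          have hball : ∀ x ∈ T \ A, (hdg H x:ℝ) ≤ ε * (T.card:ℝ)^(s+1) := by
            intro x hx
            rcases Finset.mem_sdiff.mp hx with ⟨hxT, hxA⟩
            by_contra hcon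
            exact hxA (Finset.mem_filter.mpr ⟨hxT, le_of_not_ge hcon⟩)
          calc ∑ x ∈ T \ A, (hdg H x:ℝ) ≤ (T \ A).card • (ε * (T.card:ℝ)^(s+1)) :=
                Finset.sum_le_card_nsmul _ _ _ hball
            _ = ((T \ A).card:ℝ) * (ε * (T.card:ℝ)^(s+1)) := by rw [nsmul_eq_mul]
            _ ≤ (T.card:ℝ) * (ε * (T.card:ℝ)^(s+1)) := by
                have : (T \ A).card ≤ T.card := Finset.card_le_card (Finset.sdiff_subset)
                have h' : ((T \ A).card:ℝ) ≤ (T.card:ℝ) := by exact_mod_cast this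
                exact mul_le_mul_of_nonneg_right h' (by positivity)
        have hf4 : ((s:ℝ)+2) * (ε * ((T.card:ℝ)^(s+1) * (T.card:ℝ))) ≤ ((s:ℝ)+2) * (H.card:ℝ) := by
          have h2' : ε * (T.card:ℝ)^(s+2) ≤ (H.card:ℝ) := hc
          rw [show (T.card:ℝ)^(s+2) = (T.card:ℝ)^(s+1) * (T.card:ℝ) from pow_succ _ _] at h2'
          have : (0:ℝ) ≤ (s:ℝ)+2 := by positivity
          nlinarith
        push_cast at hsumR
        have hnn : (0:ℝ) ≤ (s:ℝ) * (ε * (T.card:ℝ) * ((T.card:ℝ)^(s+1))) := by positivity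
        have key : (ε * (T.card:ℝ)) * ((T.card:ℝ)^(s+1)) ≤ (A.card:ℝ) * ((T.card:ℝ)^(s+1)) := by
          nlinarith [hf4, hsumR, hsplit, hb1, hb2, hnn]
        exact le_of_mul_le_mul_right key hpow

end Del

lemma del_spec {V : Type} [LinearOrder V] {ε : ℝ} (I : Finset V) :
    ∀ (s : ℕ) (T : Finset V) (H : Finset (Finset V)),
    (∀ e ∈ H, e ⊆ T) → (∀ e ∈ H, ¬ e ⊆ I) →
    ∃ W R : Finset V, W ⊆ I ∩ T ∧ W.card ≤ s - 1 ∧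
      ∀ F : Finset V, W ⊆ F → F ∩ T ⊆ I → del ε s T H F = R ∧ I ∩ R ⊆ W := by
  intro s
  induction s using Nat.strong_induction_on with
  | _ s ih =>
  match s with
  | 0 =>
    intro T H _ _
    exact ⟨∅, ∅, by simp, by simp, fun F _ _ => ⟨by simp [del], by simp⟩⟩
  | 1 =>
    intro T H h1 hInd
    refine ⟨∅, T.filter (fun x => ({x} : Finset V) ∈ H), by simp, by simp, fun F _ _ => ?_⟩
    constructor
    · simp [del]
    · intro x hx
      rcases Finset.mem_inter.mp hx with ⟨hxI, hxf⟩
      exact absurd (Finset.singleton_subset_iff.mpr hxI)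
        (hInd _ (Finset.mem_filter.mp hxf).2)
  | (s+2) =>
    intro T H h1 hInd
    set A := T.filter fun w => ε * (T.card : ℝ) ^ (s+1) ≤ (hdg H w : ℝ) with hA
    by_cases hAI : (A ∩ I).Nonempty
    · set w := (A ∩ I).min' hAI with hwdef
      have hwmem := (A ∩ I).min'_mem hAI
      have hwA : w ∈ A := (Finset.mem_inter.mp hwmem).1
      have hwI : w ∈ I := (Finset.mem_inter.mp hwmem).2
      have hwT : w ∈ T := (Finset.mem_filter.mp hwA).1
      have h1' : ∀ e ∈ hlink w H, e ⊆ T.erase w := by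
        intro e' he'
        obtain ⟨e, he, hw', rfl⟩ := mem_hlink.mp he'
        exact Finset.erase_subset_erase _ (h1 e he)
      have hInd' : ∀ e ∈ hlink w H, ¬ e ⊆ I := by
        intro e' he' hsub
        obtain ⟨e, he, hw', rfl⟩ := mem_hlink.mp he'
        refine hInd e he ?_
        intro x hx
        rcases eq_or_ne x w with rfl | hne
        · exact hwI
        · exact hsub (Finset.mem_erase.mpr ⟨hne, hx⟩)
      obtain ⟨W', R', hW'sub, hW'card, hspec'⟩ := ih (s+1) (by omega) (T.erase w) (hlink w H) h1' hInd'
      refine ⟨insert w W', insert w R', ?_, ?_, ?_⟩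
      · intro x hx
        rcases Finset.mem_insert.mp hx with rfl | hx
        · exact Finset.mem_inter.mpr ⟨hwI, hwT⟩
        · have := hW'sub hx
          rcases Finset.mem_inter.mp this with ⟨hxi, hxe⟩
          exact Finset.mem_inter.mpr ⟨hxi, Finset.mem_of_mem_erase hxe⟩
      · have := Finset.card_insert_le w W'
        omega
      · intro F hWF hFT
        have hwF : w ∈ F := hWF (Finset.mem_insert_self _ _)
        have hne : (A ∩ F).Nonempty := ⟨w, Finset.mem_inter.mpr ⟨hwA, hwF⟩⟩
        have hmin : (A ∩ F).min' hne = w := by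
          apply le_antisymm
          · exact Finset.min'_le _ _ (Finset.mem_inter.mpr ⟨hwA, hwF⟩)
          · apply Finset.le_min'
            intro y hy
            rcases Finset.mem_inter.mp hy with ⟨hyA, hyF⟩
            have hyT : y ∈ T := (Finset.mem_filter.mp hyA).1
            have hyI : y ∈ I := hFT (Finset.mem_inter.mpr ⟨hyF, hyT⟩)
            exact Finset.min'_le _ _ (Finset.mem_inter.mpr ⟨hyA, hyI⟩)
        have hrec := hspec' F (le_trans (Finset.subset_insert _ _) hWF)
          (fun x hx => hFT (Finset.mem_inter.mpr
            ⟨(Finset.mem_inter.mp hx).1, Finset.mem_of_mem_erase (Finset.mem_inter.mp hx).2⟩))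
        constructor
        · rw [del, dif_pos hne]
          rw [show ((T.filter fun w => ε * (T.card : ℝ) ^ (s+1) ≤ (hdg H w : ℝ)) ∩ F).min' hne = w from hmin]
          rw [hrec.1]
        · intro x hx
          rcases Finset.mem_inter.mp hx with ⟨hxI, hxR⟩
          rcases Finset.mem_insert.mp hxR with rfl | hxR'
          · exact Finset.mem_insert_self _ _
          · exact Finset.mem_insert_of_mem (hrec.2 (Finset.mem_inter.mpr ⟨hxI, hxR'⟩))
    · refine ⟨∅, A, by simp, by simp, fun F _ hFT => ?_⟩
      have hAF : ¬ (A ∩ F).Nonempty := by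
        intro ⟨x, hx⟩
        rcases Finset.mem_inter.mp hx with ⟨hxA, hxF⟩
        have hxT : x ∈ T := (Finset.mem_filter.mp hxA).1
        exact hAI ⟨x, Finset.mem_inter.mpr ⟨hxA, hFT (Finset.mem_inter.mpr ⟨hxF, hxT⟩)⟩⟩
      constructor
      · rw [del, dif_neg hAF]
      · intro x hx
        rcases Finset.mem_inter.mp hx with ⟨hxI, hxA⟩
        exact absurd ⟨x, Finset.mem_inter.mpr ⟨hxA, hxI⟩⟩ hAI

section Run
variable {V : Type} [LinearOrder V]

noncomputable def hrun (u r : ℕ) (ε : ℝ) (G : Finset (Finset V)) (pick : Finset V → V) :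
    ℕ → Finset V → Finset V → Finset V
  | 0, S, _ => S
  | (f+1), S, F =>
    if u < S.card then
      if pick S ∈ F then
        hrun u r ε G pick f
          (S \ insert (pick S)
            (del ε (r-1) (S.erase (pick S)) (hlink (pick S) (G.filter (fun e => e ⊆ S))) F)) F
      else hrun u r ε G pick f (S.erase (pick S)) F
    else S

lemma hrun_card_le {u r : ℕ} {ε : ℝ} {G : Finset (Finset V)} {pick : Finset V → V}
    (hpick : ∀ S : Finset V, u < S.card → pick S ∈ S) :
    ∀ (f : ℕ) (S F : Finset V), S.card ≤ f → (hrun u r ε G pick f S F).card ≤ u := by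
  intro f
  induction f with
  | zero => intro S F h; simpa [hrun] using by omega
  | succ f IH =>
    intro S F h
    rw [hrun]
    by_cases hc : u < S.card
    · rw [if_pos hc]
      have hvS := hpick S hc
      by_cases hvF : pick S ∈ F
      · rw [if_pos hvF]
        apply IH
        have hsub : S \ insert (pick S)
            (del ε (r-1) (S.erase (pick S)) (hlink (pick S) (G.filter (fun e => e ⊆ S))) F)
            ⊆ S.erase (pick S) := by
          intro x hx
          rcases Finset.mem_sdiff.mp hx with ⟨hxS, hxn⟩
          exact Finset.mem_erase.mpr ⟨fun he => hxn (he ▸ Finset.mem_insert_self _ _), hxS⟩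
        have := Finset.card_le_card hsub
        have := Finset.card_erase_of_mem hvS
        omega
      · rw [if_neg hvF]
        apply IH
        have := Finset.card_erase_of_mem hvS
        omega
    · rw [if_neg hc]
      omega

lemma hmain {u r : ℕ} {ε : ℝ} {G : Finset (Finset V)} {pick : Finset V → V}
    (hr : 2 ≤ r) (hε0 : 0 < ε) (hε1 : ε ≤ 1)
    (hunif : ∀ e ∈ G, e.card = r)
    (hpick1 : ∀ S : Finset V, u < S.card → pick S ∈ S)
    (hpick2 : ∀ S : Finset V, u < S.card →
        ε * ((S.card : ℝ) - 1) ^ (r - 1) ≤ ((G.filter (fun e => e ⊆ S ∧ pick S ∈ e)).card : ℝ)) :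
    ∀ (f : ℕ) (S I : Finset V) (j : ℕ), S.card ≤ f → I ⊆ S → (∀ e ∈ G, ¬ e ⊆ I) →
      (1 - ε) ^ j * (S.card : ℝ) ≤ (u : ℝ) →
      ∃ F₀, F₀ ⊆ I ∧ F₀.card ≤ (r-1) * j ∧
        ∀ F, F₀ ⊆ F → F ∩ S ⊆ I → I \ F ⊆ hrun u r ε G pick f S F := by
  have hone : (0:ℝ) ≤ 1 - ε := by linarith
  intro f
  induction f with
  | zero =>
    intro S I j hSf hIS hInd hj
    exact ⟨∅, Finset.empty_subset _, by simp, fun F _ _ => by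
      rw [hrun]; exact Finset.sdiff_subset.trans hIS⟩
  | succ f IHf =>
    intro S I j hSf hIS hInd hj
    by_cases hcard : u < S.card
    · have hj0 : j ≠ 0 := by
        rintro rfl
        rw [pow_zero, one_mul] at hj
        have := Nat.cast_le.mp hj
        omega
      obtain ⟨j', rfl⟩ : ∃ j', j = j' + 1 := ⟨j-1, by omega⟩
      set v := pick S with hv
      have hvS : v ∈ S := hpick1 S hcard
      have hS1 : 1 ≤ S.card := Finset.card_pos.mpr ⟨v, hvS⟩
      by_cases hvI : v ∈ I
      · -- round step
        set T := S.erase v with hT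
        set H := hlink v (G.filter (fun e => e ⊆ S)) with hH
        have hTcardR : ((T.card : ℕ) : ℝ) = (S.card : ℝ) - 1 := by
          rw [hT, Finset.card_erase_of_mem hvS]
          push_cast [hS1]
          ring
        have hH1 : ∀ e ∈ H, e ⊆ T := by
          intro e' he'
          obtain ⟨e, he, hw', rfl⟩ := mem_hlink.mp he'
          exact Finset.erase_subset_erase _ (Finset.mem_filter.mp he).2
        have hH2 : ∀ e ∈ H, e.card = r - 1 := by
          intro e' he'
          obtain ⟨e, he, hw', rfl⟩ := mem_hlink.mp he'
          rw [Finset.card_erase_of_mem hw', hunif e (Finset.mem_filter.mp he).1]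
        have hHInd : ∀ e ∈ H, ¬ e ⊆ I := by
          intro e' he' hsub
          obtain ⟨e, he, hw', rfl⟩ := mem_hlink.mp he'
          refine hInd e (Finset.mem_filter.mp he).1 ?_
          intro x hx
          rcases eq_or_ne x v with rfl | hne
          · exact hvI
          · exact hsub (Finset.mem_erase.mpr ⟨hne, hx⟩)
        have hHcard : ε * ((T.card:ℝ)) ^ (r-1) ≤ (H.card : ℝ) := by
          have : H.card = (G.filter (fun e => e ⊆ S ∧ v ∈ e)).card := by
            rw [hH, hlink_card]
            unfold hdg
            rw [Finset.filter_filter]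
          rw [this, hTcardR]
          exact hpick2 S hcard
        obtain ⟨W, R, hWsub, hWcard, hspec⟩ := del_spec (ε := ε) I (r-1) T H hH1 hHInd
        have hRdel := hspec I (hWsub.trans Finset.inter_subset_left) Finset.inter_subset_left
        have hRT : R ⊆ T := by rw [← hRdel.1]; exact del_subset _ _ _ _ _
        have hRcard : ε * (T.card : ℝ) ≤ (R.card : ℝ) := by
          rw [← hRdel.1]
          exact del_card hε0 hε1 (r-1) (by omega) T H I hH1 hH2 hHcard
        set S' := S \ insert v R with hS'
        have hvR : v ∉ R := fun h => Finset.notMem_erase v S (hRT h)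
        have hinsS : insert v R ⊆ S :=
          Finset.insert_subset hvS (hRT.trans (Finset.erase_subset _ _))
        have hS'card : S'.card = S.card - (R.card + 1) := by
          rw [hS', Finset.card_sdiff_of_subset hinsS, Finset.card_insert_of_notMem hvR]
        have hRS : R.card + 1 ≤ S.card := by
          have := Finset.card_le_card hinsS
          rwa [Finset.card_insert_of_notMem hvR] at this
        have hS'cardR : ((S'.card : ℕ) : ℝ) ≤ (1 - ε) * (S.card : ℝ) := by
          rw [hS'card]
          push_cast [hRS]
          have h1 : ε * ((S.card:ℝ) - 1) ≤ (R.card : ℝ) := by rwa [hTcardR] at hRcard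
          nlinarith [hone, Nat.cast_nonneg (α := ℝ) S.card]
        have hS'f : S'.card ≤ f := by
          rw [hS'card]; omega
        have hj' : (1 - ε) ^ j' * ((S'.card : ℕ) : ℝ) ≤ (u : ℝ) := by
          calc (1 - ε) ^ j' * ((S'.card : ℕ) : ℝ)
              ≤ (1 - ε) ^ j' * ((1 - ε) * (S.card : ℝ)) :=
                mul_le_mul_of_nonneg_left hS'cardR (pow_nonneg hone _)
            _ = (1 - ε) ^ (j' + 1) * (S.card : ℝ) := by ring
            _ ≤ (u : ℝ) := hj
        obtain ⟨F₀'', hF''I, hF''card, hF''spec⟩ := IHf S' (I ∩ S') j'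
          hS'f Finset.inter_subset_right
          (fun e he hsub => hInd e he (hsub.trans Finset.inter_subset_left)) hj'
        refine ⟨insert v (W ∪ F₀''), ?_, ?_, ?_⟩
        · apply Finset.insert_subset hvI
          apply Finset.union_subset (hWsub.trans Finset.inter_subset_left)
            (hF''I.trans Finset.inter_subset_left)
        · have h1 := Finset.card_insert_le v (W ∪ F₀'')
          have h2 := Finset.card_union_le W F₀''
          have : 1 ≤ r - 1 := by omega
          calc (insert v (W ∪ F₀'')).card ≤ 1 + (W.card + F₀''.card) := by omega
            _ ≤ 1 + ((r - 1 - 1) + (r-1) * j') := by omega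
            _ ≤ (r-1) * (j' + 1) := by
                have : (r-1) * (j'+1) = (r-1) * j' + (r-1) := by ring
                omega
        · intro F hF₀F hFS
          have hvF : v ∈ F := hF₀F (Finset.mem_insert_self _ _)
          have hWF : W ⊆ F :=
            (Finset.subset_union_left.trans (Finset.subset_insert _ _)).trans hF₀F
          have hF''F : F₀'' ⊆ F :=
            (Finset.subset_union_right.trans (Finset.subset_insert _ _)).trans hF₀F
          have hFTI : F ∩ T ⊆ I := fun x hx => hFS (Finset.mem_inter.mpr
            ⟨(Finset.mem_inter.mp hx).1, Finset.mem_of_mem_erase (Finset.mem_inter.mp hx).2⟩)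
          have hdelF := hspec F hWF hFTI
          rw [hrun, if_pos hcard, if_pos hvF, ← hv, ← hT, ← hH, hdelF.1, ← hS']
          have hFS' : F ∩ S' ⊆ I ∩ S' := by
            intro x hx
            rcases Finset.mem_inter.mp hx with ⟨hxF, hxS'⟩
            exact Finset.mem_inter.mpr
              ⟨hFS (Finset.mem_inter.mpr ⟨hxF, (Finset.mem_sdiff.mp hxS').1⟩), hxS'⟩
          have hsub2 := hF''spec F hF''F hFS'
          intro x hxIF
          rcases Finset.mem_sdiff.mp hxIF with ⟨hxI, hxF⟩
          have hxne : x ≠ v := fun h => hxF (h ▸ hvF)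
          have hxS' : x ∈ S' := by
            refine Finset.mem_sdiff.mpr ⟨hIS hxI, ?_⟩
            intro hxins
            rcases Finset.mem_insert.mp hxins with rfl | hxR
            · exact hxne rfl
            · exact hxF (hWF (hdelF.2 (Finset.mem_inter.mpr ⟨hxI, hxR⟩)))
          exact hsub2 (Finset.mem_sdiff.mpr ⟨Finset.mem_inter.mpr ⟨hxI, hxS'⟩, hxF⟩)
      · -- v ∉ I : delete v
        have hIerase : I ⊆ S.erase v := fun x hx =>
          Finset.mem_erase.mpr ⟨fun h => hvI (h ▸ hx), hIS hx⟩
        have hef : (S.erase v).card ≤ f := by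
          have := Finset.card_erase_of_mem hvS
          omega
        have hej : (1 - ε) ^ (j'+1) * (((S.erase v).card : ℕ) : ℝ) ≤ (u : ℝ) := by
          refine le_trans (mul_le_mul_of_nonneg_left ?_ (pow_nonneg hone _)) hj
          exact_mod_cast Finset.card_le_card (Finset.erase_subset _ _)
        obtain ⟨F₀, h1, h2, h3⟩ := IHf (S.erase v) I (j'+1) hef hIerase hInd hej
        refine ⟨F₀, h1, h2, ?_⟩
        intro F hF hFS
        have hvF : v ∉ F := fun h => hvI (hFS (Finset.mem_inter.mpr ⟨h, hvS⟩))
        rw [hrun, if_pos hcard, if_neg hvF]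
        exact h3 F hF (fun x hx => hFS (Finset.mem_inter.mpr
          ⟨(Finset.mem_inter.mp hx).1, Finset.mem_of_mem_erase (Finset.mem_inter.mp hx).2⟩))
    · refine ⟨∅, Finset.empty_subset _, by simp, fun F _ _ => ?_⟩
      rw [hrun, if_neg hcard]
      exact Finset.sdiff_subset.trans hIS

end Run

/-- The degree of `v` in the induced subhypergraph `G[S]`: the number of edges of `G`
contained in `S` and containing `v`. -/
noncomputable def hypDegreeOn {V : Type} (G : Finset (Finset V)) (S : Finset V) (v : V) : ℕ :=
  Nat.card {e : Finset V // e ∈ G ∧ e ⊆ S ∧ v ∈ e}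

/-- Hypergraph container-type counting lemma: if in every vertex subset `S` of size more
than `u` some vertex has degree at least `ε·(|S|-1)^(r-1)` in `G[S]`, then the number of
independent sets of size `k` is at most `C(n,(r-1)ℓ)·C(u,k-(r-1)ℓ)`. -/
theorem count_indep_sets_upper_bound_hypergraph
    (r ℓ k u n : ℕ) (hr : 2 ≤ r) (hk : (r - 1) * ℓ ≤ k) (hu : 0 < u) (hn : 0 < n)
    (ε : ℝ) (hε0 : 0 < ε) (hε1 : ε ≤ 1)
    (hun : (1 - ε) ^ ℓ * (n : ℝ) ≤ (u : ℝ))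
    (V : Type) [Fintype V] (hV : Fintype.card V = n)
    (G : Finset (Finset V)) (hunif : ∀ e ∈ G, e.card = r)
    (hdeg : ∀ S : Finset V, u < S.card →
      ∃ v ∈ S, ε * ((S.card : ℝ) - 1) ^ (r - 1) ≤ (hypDegreeOn G S v : ℝ)) :
    Nat.card {S : Finset V // S.card = k ∧ ∀ e ∈ G, ¬e ⊆ S} ≤
      n.choose ((r - 1) * ℓ) * u.choose (k - (r - 1) * ℓ) := by
  classical
  letI : LinearOrder V := LinearOrder.lift' (Fintype.equivFin V) (Equiv.injective _)
  haveI : Nonempty V := by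
    rw [← Fintype.card_pos_iff, hV]; exact hn
  set a := (r - 1) * ℓ with ha
  -- degree reformulation
  have hdegEq : ∀ (S : Finset V) (v : V),
      hypDegreeOn G S v = (G.filter (fun e => e ⊆ S ∧ v ∈ e)).card := by
    intro S v
    rw [hypDegreeOn, Nat.card_eq_fintype_card, Fintype.card_subtype]
    congr 1
    ext e
    simp [and_assoc]
  -- the pick function
  let pick : Finset V → V := fun S => if h : u < S.card then (hdeg S h).choose
    else Classical.arbitrary V
  have hpick1 : ∀ S : Finset V, u < S.card → pick S ∈ S := by
    intro S h
    simp only [pick, dif_pos h]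
    exact (hdeg S h).choose_spec.1
  have hpick2 : ∀ S : Finset V, u < S.card →
      ε * ((S.card : ℝ) - 1) ^ (r - 1) ≤ ((G.filter (fun e => e ⊆ S ∧ pick S ∈ e)).card : ℝ) := by
    intro S h
    simp only [pick, dif_pos h]
    have h2 := (hdeg S h).choose_spec.2
    rwa [hdegEq] at h2
  set D : Finset V → Finset V := fun F => hrun u r ε G pick n Finset.univ F with hD
  have hDcard : ∀ F, (D F).card ≤ u := by
    intro F
    exact hrun_card_le hpick1 n Finset.univ F (by rw [Finset.card_univ, hV])
  -- existence of a good fingerprint for each independent set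
  have hexists : ∀ I : Finset V, I.card = k → (∀ e ∈ G, ¬ e ⊆ I) →
      ∃ F : Finset V, F ⊆ I ∧ F.card = a ∧ I \ F ⊆ D F := by
    intro I hIcard hind
    obtain ⟨F₀, hF₀I, hF₀card, hF₀spec⟩ := hmain hr hε0 hε1 hunif hpick1 hpick2 n
      Finset.univ I ℓ (by rw [Finset.card_univ, hV]) (Finset.subset_univ _) hind
      (by rw [Finset.card_univ, hV]; exact hun)
    obtain ⟨F, hF₀F, hFI, hFcard⟩ := Finset.exists_subsuperset_card_eq hF₀I
      hF₀card (by rw [hIcard]; exact hk)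
    refine ⟨F, hFI, hFcard, ?_⟩
    exact hF₀spec F hF₀F (fun x hx => hFI (Finset.mem_inter.mp hx).1)
  -- the fingerprint selector
  let FF : Finset V → Finset V := fun I =>
    if h : ∃ F : Finset V, F ⊆ I ∧ F.card = a ∧ I \ F ⊆ D F then h.choose else ∅
  have hFF : ∀ I : Finset V, I.card = k → (∀ e ∈ G, ¬ e ⊆ I) →
      FF I ⊆ I ∧ (FF I).card = a ∧ I \ FF I ⊆ D (FF I) := by
    intro I h1 h2
    have h := hexists I h1 h2
    simp only [FF, dif_pos h]
    exact h.choose_spec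
  -- counting
  have hcount : Nat.card {S : Finset V // S.card = k ∧ ∀ e ∈ G, ¬e ⊆ S}
      = ((Finset.univ : Finset (Finset V)).filter
          (fun S => S.card = k ∧ ∀ e ∈ G, ¬e ⊆ S)).card := by
    rw [Nat.card_eq_fintype_card, Fintype.card_subtype]
  rw [hcount]
  set Tgt : Finset (Finset V × Finset V) :=
    (Finset.univ.powersetCard a).biUnion
      (fun F => ((D F).powersetCard (k - a)).image (fun X => (F, X))) with hTgt
  have hstep : ((Finset.univ : Finset (Finset V)).filter
      (fun S => S.card = k ∧ ∀ e ∈ G, ¬e ⊆ S)).card ≤ Tgt.card := by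
    apply Finset.card_le_card_of_injOn (fun I => (FF I, I \ FF I))
    · intro I hI
      rcases Finset.mem_filter.mp hI with ⟨-, hIcard, hind⟩
      obtain ⟨hsub, hcard, hcont⟩ := hFF I hIcard hind
      apply Finset.mem_biUnion.mpr
      refine ⟨FF I, ?_, ?_⟩
      · exact Finset.mem_powersetCard.mpr ⟨Finset.subset_univ _, hcard⟩
      · apply Finset.mem_image.mpr
        refine ⟨I \ FF I, ?_, rfl⟩
        apply Finset.mem_powersetCard.mpr
        refine ⟨hcont, ?_⟩
        rw [Finset.card_sdiff_of_subset hsub, hIcard, hcard]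
    · intro I hI I' hI' heq
      rcases Finset.mem_coe.mp hI with hI2
      rcases Finset.mem_filter.mp hI2 with ⟨-, hIcard, hind⟩
      rcases Finset.mem_filter.mp (Finset.mem_coe.mp hI') with ⟨-, hIcard', hind'⟩
      obtain ⟨hsub, -, -⟩ := hFF I hIcard hind
      obtain ⟨hsub', -, -⟩ := hFF I' hIcard' hind'
      have h1 : FF I = FF I' := congrArg Prod.fst heq
      have h2 : I \ FF I = I' \ FF I' := congrArg Prod.snd heq
      calc I = FF I ∪ I \ FF I := (Finset.union_sdiff_of_subset hsub).symm
        _ = FF I' ∪ I' \ FF I' := by rw [h2, h1]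
        _ = I' := Finset.union_sdiff_of_subset hsub'
  refine le_trans hstep ?_
  calc Tgt.card ≤ ∑ F ∈ Finset.univ.powersetCard a,
        (((D F).powersetCard (k - a)).image (fun X => (F, X))).card :=
        Finset.card_biUnion_le
    _ ≤ ∑ F ∈ Finset.univ.powersetCard a, u.choose (k - a) := by
        apply Finset.sum_le_sum
        intro F _
        calc (((D F).powersetCard (k - a)).image (fun X => (F, X))).card
            ≤ ((D F).powersetCard (k - a)).card := Finset.card_image_le
          _ = (D F).card.choose (k - a) := Finset.card_powersetCard _ _
          _ ≤ u.choose (k - a) := Nat.choose_le_choose _ (hDcard F)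
    _ = (Finset.univ.powersetCard a).card * u.choose (k - a) := by
        rw [Finset.sum_const, smul_eq_mul]
    _ = n.choose a * u.choose (k - a) := by
        rw [Finset.card_powersetCard, Finset.card_univ, hV]
end
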